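/- arXiv:0812.1165 — 2 statements merged into one kernel-verified Lean document; each statement's English description precedes it below -/
import Mathlib

section
/- For m = 4 and every singleton A = {a} with a ∈ {1,2,3,4}, the formal power series identity G_{A,A}(t) · (1 + t³)(1 − t⁴) = 1 + t³ + t⁵ holds in ℤ[[t]]; equivalently, G_{A,A}(t) = (1 + t³ + t⁵)/((1 + t³)(1 − t⁴)). -/
/-- Adjacency in the square grid graph on ℤ²: `v` and `w` are adjacent iff
`|v₁ − w₁| + |v₂ − w₂| = 1`. -/
def gridAdj (v w : ℤ × ℤ) : Prop :=
  (v.1 - w.1).natAbs + (v.2 - w.2).natAbs = 1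

/-- `σ` is an `(A,B)`-configuration on the parallelogram `P_{m,n}`:
an independent set of the induced subgraph of the grid on
`{(a,b) : 1 ≤ a ≤ m, 1 − a < b ≤ 1 − a + n}` whose trace on the left boundary
`{(a, 2−a)}` is prescribed by `A` and on the right boundary `{(a, 1−a+n)}`
by `B`. -/
def ParaConfig (m n : ℕ) (A B : Finset ℕ) (σ : Finset (ℤ × ℤ)) : Prop :=
  (∀ p ∈ σ, 1 ≤ p.1 ∧ p.1 ≤ (m : ℤ) ∧ 1 - p.1 < p.2 ∧ p.2 ≤ 1 - p.1 + (n : ℤ)) ∧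
  (∀ v ∈ σ, ∀ w ∈ σ, ¬ gridAdj v w) ∧
  (∀ a : ℕ, 1 ≤ a → a ≤ m →
    ((((a : ℤ), 2 - (a : ℤ)) ∈ σ ↔ a ∈ A) ∧
     (((a : ℤ), 1 - (a : ℤ) + (n : ℤ)) ∈ σ ↔ a ∈ B)))

/-- `Z(P_{m,n}(A,B)) = Σ_σ (−1)^{|σ|}` over all `(A,B)`-configurations `σ`. -/
noncomputable def Zpara (m n : ℕ) (A B : Finset ℕ) : ℤ :=
  ∑ᶠ σ ∈ {σ : Finset (ℤ × ℤ) | ParaConfig m n A B σ}, (-1 : ℤ) ^ σ.card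

/-- The generating function
`G_{A,A}(t) = 1 + (−1)^{|A|} Σ_{n ≥ 1} Z(P_{m,n+1}(A,A)) tⁿ ∈ ℤ[[t]]`. -/
noncomputable def Gser (m : ℕ) (A : Finset ℕ) : PowerSeries ℤ :=
  PowerSeries.mk fun k => if k = 0 then 1 else (-1 : ℤ) ^ A.card * Zpara m (k + 1) A A

namespace Gaux

def compat (C B : Finset ℕ) : Prop := ∀ x ∈ C, x ∉ B ∧ x + 1 ∉ B

instance (C B : Finset ℕ) : Decidable (compat C B) :=
  inferInstanceAs (Decidable (∀ x ∈ C, x ∉ B ∧ x + 1 ∉ B))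

def P4 : Finset (Finset ℕ) := (Finset.Icc 1 4).powerset

def stepF (f : Finset ℕ → ℤ) (B : Finset ℕ) : ℤ :=
  (-1) ^ B.card * ∑ C ∈ P4, if compat C B then f C else 0

def w (a : ℕ) : ℕ → Finset ℕ → ℤ
  | 0 => fun C => if C = {a} then 1 else 0
  | k + 1 => stepF (w a k)

lemma stepF_congr {f g : Finset ℕ → ℤ} (h : ∀ C ∈ P4, f C = g C) (B : Finset ℕ) :
    stepF f B = stepF g B := by
  unfold stepF
  congr 1
  exact Finset.sum_congr rfl fun C hC => by rw [h C hC]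

lemma paraConfig_finite (m n : ℕ) (A B : Finset ℕ) :
    {σ : Finset (ℤ × ℤ) | ParaConfig m n A B σ}.Finite := by
  apply Set.Finite.subset
    (Finset.finite_toSet ((Finset.Icc (1 : ℤ) m ×ˢ Finset.Icc (2 - (m : ℤ)) n).powerset))
  intro σ hσ
  simp only [Set.mem_setOf_eq] at hσ
  simp only [Finset.coe_powerset, Set.mem_preimage, Set.mem_powerset_iff, Finset.coe_subset,
    Finset.mem_coe, Finset.mem_powerset]
  intro p hp
  obtain ⟨h1, h2, h3, h4⟩ := hσ.1 p hp
  simp only [Finset.mem_product, Finset.mem_Icc]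
  omega

lemma Zpara_eq (m n : ℕ) (A B : Finset ℕ) :
    Zpara m n A B = ∑ σ ∈ (paraConfig_finite m n A B).toFinset, (-1 : ℤ) ^ σ.card :=
  finsum_mem_eq_finite_toFinset_sum _ _

lemma Zpara_one (a : ℕ) (ha1 : 1 ≤ a) (ha4 : a ≤ 4) (C : Finset ℕ)
    (hC : C ⊆ Finset.Icc 1 4) :
    Zpara 4 1 {a} C = if C = {a} then -1 else 0 := by
  have hσ0 : ParaConfig 4 1 {a} {a} ({((a : ℤ), 2 - (a : ℤ))} : Finset (ℤ × ℤ)) := by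
    refine ⟨?_, ?_, ?_⟩
    · intro p hp
      simp only [Finset.mem_singleton] at hp
      subst hp
      push_cast
      constructor <;> [omega; constructor] <;> [omega; constructor] <;> push_cast <;> omega
    · intro v hv w hw
      simp only [Finset.mem_singleton] at hv hw
      subst hv; subst hw
      intro hadj
      unfold gridAdj at hadj
      omega
    · intro x hx1 hx4
      constructor
      · simp only [Finset.mem_singleton, Prod.mk.injEq]
        constructor
        · rintro ⟨h, -⟩
          exact_mod_cast h
        · rintro rfl; exact ⟨rfl, rfl⟩
      · simp only [Finset.mem_singleton, Prod.mk.injEq]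
        constructor
        · rintro ⟨h, -⟩
          exact_mod_cast h
        · rintro rfl
          constructor
          · rfl
          · push_cast; ring
  by_cases h : C = {a}
  · subst h
    rw [if_pos rfl]
    unfold Zpara
    have hset : {σ : Finset (ℤ × ℤ) | ParaConfig 4 1 {a} {a} σ}
        = ({({((a : ℤ), 2 - (a : ℤ))} : Finset (ℤ × ℤ))} : Set (Finset (ℤ × ℤ))) := by
      ext σ
      simp only [Set.mem_setOf_eq, Set.mem_singleton_iff]
      constructor
      · intro hσ
        obtain ⟨hbd, hind, hbdry⟩ := hσ
        ext p
        simp only [Finset.mem_singleton]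
        constructor
        · intro hp
          obtain ⟨h1, h2, h3, h4⟩ := hbd p hp
          have hx1 : 1 ≤ p.1.toNat := by omega
          have hx4 : p.1.toNat ≤ 4 := by omega
          have hcast : (p.1.toNat : ℤ) = p.1 := by omega
          have hp2 : p.2 = 2 - p.1 := by push_cast at h4; omega
          have := (hbdry p.1.toNat hx1 hx4).1
          rw [hcast] at this
          have hpa : p = (p.1, 2 - p.1) := by
            ext <;> simp [hp2]
          rw [hpa] at hp
          have hmem : p.1.toNat ∈ ({a} : Finset ℕ) := this.1 (by rw [← hpa] at hp ⊢; exact hp)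
          simp only [Finset.mem_singleton] at hmem
          have : p.1 = (a : ℤ) := by omega
          rw [hpa, this]
        · intro hp
          subst hp
          have := (hbdry a ha1 ha4).1
          exact this.2 (Finset.mem_singleton_self a)
      · rintro rfl; exact hσ0
    rw [hset, finsum_mem_singleton, Finset.card_singleton, pow_one]
  · rw [if_neg h]
    unfold Zpara
    have hset : {σ : Finset (ℤ × ℤ) | ParaConfig 4 1 {a} C σ} = (∅ : Set (Finset (ℤ × ℤ))) := by
      ext σ
      simp only [Set.mem_setOf_eq, Set.mem_empty_iff_false, iff_false]
      intro hσ
      obtain ⟨hbd, hind, hbdry⟩ := hσ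
      apply h
      ext x
      simp only [Finset.mem_singleton]
      constructor
      · intro hx
        have hxI := hC hx
        simp only [Finset.mem_Icc] at hxI
        have h2 := (hbdry x hxI.1 hxI.2).2
        have h1 := (hbdry x hxI.1 hxI.2).1
        have : ((x : ℤ), 1 - (x : ℤ) + ((1 : ℕ) : ℤ)) = ((x : ℤ), 2 - (x : ℤ)) := by
          push_cast; ring_nf
        rw [this] at h2
        have := h1.1 (h2.2 hx)
        simpa using this
      · intro hx
        rw [hx]
        have h2 := (hbdry a ha1 ha4).2
        have h1 := (hbdry a ha1 ha4).1
        have heq : ((a : ℤ), 1 - (a : ℤ) + ((1 : ℕ) : ℤ)) = ((a : ℤ), 2 - (a : ℤ)) := by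
          push_cast; ring_nf
        rw [heq] at h2
        exact h2.1 (h1.2 (Finset.mem_singleton_self a))
    rw [hset, finsum_mem_empty]


def colstate (z : ℤ) (σ : Finset (ℤ × ℤ)) : Finset ℕ :=
  (Finset.Icc 1 4).filter fun x => ((x : ℤ), 1 - (x : ℤ) + z) ∈ σ

def bcol (z : ℤ) (B : Finset ℕ) : Finset (ℤ × ℤ) :=
  B.image fun x : ℕ => ((x : ℤ), 1 - (x : ℤ) + z)

lemma mem_bcol {z : ℤ} {B : Finset ℕ} {p : ℤ × ℤ} :
    p ∈ bcol z B ↔ ∃ x ∈ B, (x : ℤ) = p.1 ∧ p.2 = 1 - p.1 + z := by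
  unfold bcol
  simp only [Finset.mem_image, Prod.ext_iff]
  constructor
  · rintro ⟨x, hx, h1, h2⟩
    exact ⟨x, hx, h1, by omega⟩
  · rintro ⟨x, hx, h1, h2⟩
    exact ⟨x, hx, h1, by omega⟩

lemma bcol_card (z : ℤ) (B : Finset ℕ) : (bcol z B).card = B.card :=
  Finset.card_image_of_injective _ (fun x y h => by
    have : (x : ℤ) = y := congrArg Prod.fst h
    exact_mod_cast this)

section Rec

variable {A B C : Finset ℕ} {n : ℕ}

/-- Sublemma A: restriction of a config of `P_{4,n+1}` to the first `n` columns. -/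
lemma config_filter (hn : 1 ≤ n) {σ : Finset (ℤ × ℤ)}
    (hσ : ParaConfig 4 (n + 1) A B σ) :
    ParaConfig 4 n A (colstate (n : ℤ) σ) (σ.filter fun p => p.1 + p.2 ≤ (n : ℤ) + 1) := by
  obtain ⟨hbd, hind, hbdry⟩ := hσ
  refine ⟨?_, ?_, ?_⟩
  · intro p hp
    rw [Finset.mem_filter] at hp
    obtain ⟨h1, h2, h3, h4⟩ := hbd p hp.1
    have := hp.2
    push_cast at h4 ⊢
    omega
  · intro v hv w hw
    exact hind v (Finset.mem_of_mem_filter v hv) w (Finset.mem_of_mem_filter w hw)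
  · intro x hx1 hx4
    constructor
    · rw [Finset.mem_filter]
      rw [← (hbdry x hx1 hx4).1]
      constructor
      · rintro ⟨h, -⟩; exact h
      · intro h; exact ⟨h, by push_cast; omega⟩
    · rw [Finset.mem_filter]
      unfold colstate
      rw [Finset.mem_filter, Finset.mem_Icc]
      constructor
      · rintro ⟨h, -⟩; exact ⟨⟨hx1, hx4⟩, h⟩
      · rintro ⟨-, h⟩; exact ⟨h, by push_cast; omega⟩

/-- Sublemma B: extension of a config of `P_{4,n}` by a prescribed last column. -/
lemma config_union (hn : 1 ≤ n) (hB : B ⊆ Finset.Icc 1 4) (hC : C ⊆ Finset.Icc 1 4)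
    (hcb : compat C B) {τ : Finset (ℤ × ℤ)} (hτ : ParaConfig 4 n A C τ) :
    ParaConfig 4 (n + 1) A B (τ ∪ bcol ((n : ℤ) + 1) B) := by
  obtain ⟨hbd, hind, hbdry⟩ := hτ
  -- facts about bcol points
  have hbp : ∀ p ∈ bcol ((n : ℤ) + 1) B, 1 ≤ p.1 ∧ p.1 ≤ 4 ∧ p.2 = 1 - p.1 + ((n : ℤ) + 1) := by
    intro p hp
    obtain ⟨x, hx, h1, h2⟩ := mem_bcol.1 hp
    have := hB hx
    rw [Finset.mem_Icc] at this
    omega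
  refine ⟨?_, ?_, ?_⟩
  · intro p hp
    rw [Finset.mem_union] at hp
    rcases hp with hp | hp
    · obtain ⟨h1, h2, h3, h4⟩ := hbd p hp
      push_cast
      omega
    · obtain ⟨h1, h2, h3⟩ := hbp p hp
      push_cast
      omega
  · -- independence
    have key : ∀ v ∈ τ, ∀ q ∈ bcol ((n : ℤ) + 1) B, ¬ gridAdj v q := by
      intro v hv q hq hadj
      obtain ⟨h1, h2, h3, h4⟩ := hbd v hv
      obtain ⟨g1, g2, g3⟩ := hbp q hq
      obtain ⟨y, hy, hy1, hy2⟩ := mem_bcol.1 hq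
      unfold gridAdj at hadj
      -- either v = (q.1, 1 - q.1 + n)  or  v = (q.1 - 1, 1 - (q.1 - 1) + n)
      rcases (by omega : (v.1 = q.1 ∧ v.2 = 1 - q.1 + (n : ℤ)) ∨
          (v.1 = q.1 - 1 ∧ v.2 = 1 - (q.1 - 1) + (n : ℤ))) with ⟨e1, e2⟩ | ⟨e1, e2⟩
      · -- y ∈ C and y ∈ B
        have hyI := hB hy
        rw [Finset.mem_Icc] at hyI
        have hb := (hbdry y hyI.1 hyI.2).2
        have hvq : v = ((y : ℤ), 1 - (y : ℤ) + (n : ℤ)) := by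
          ext
          · simp [e1, ← hy1]
          · simp [e2, ← hy1]
        rw [hvq] at hv
        have hyC : y ∈ C := hb.1 hv
        exact (hcb y hyC).1 hy
      · -- y - 1 ∈ C and (y-1)+1 ∈ B
        have hy2' : 2 ≤ y := by omega
        have hyI := hB hy
        rw [Finset.mem_Icc] at hyI
        have hx1 : 1 ≤ y - 1 := by omega
        have hx4 : y - 1 ≤ 4 := by omega
        have hb := (hbdry (y - 1) hx1 hx4).2
        have hvq : v = (((y - 1 : ℕ) : ℤ), 1 - ((y - 1 : ℕ) : ℤ) + (n : ℤ)) := by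
          have : ((y - 1 : ℕ) : ℤ) = (y : ℤ) - 1 := by omega
          ext
          · simp [e1, this, ← hy1]
          · simp [e2, this, ← hy1]
        rw [hvq] at hv
        have hyC : y - 1 ∈ C := hb.1 hv
        have := (hcb (y - 1) hyC).2
        rw [(by omega : y - 1 + 1 = y)] at this
        exact this hy
    intro v hv q hq hadj
    rw [Finset.mem_union] at hv hq
    rcases hv with hv | hv <;> rcases hq with hq | hq
    · exact hind v hv q hq hadj
    · exact key v hv q hq hadj
    · refine key q hq v hv ?_
      unfold gridAdj at hadj ⊢
      omega
    · obtain ⟨x, hx, hx1, hx2⟩ := mem_bcol.1 hv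
      obtain ⟨y, hy, hy1, hy2⟩ := mem_bcol.1 hq
      unfold gridAdj at hadj
      omega
  · intro x hx1 hx4
    have hb := hbdry x hx1 hx4
    constructor
    · rw [Finset.mem_union]
      rw [← hb.1]
      constructor
      · rintro (h | h)
        · exact h
        · exfalso
          obtain ⟨y, hy, hy1, hy2⟩ := mem_bcol.1 h
          simp only at hy1 hy2
          omega
      · intro h; exact Or.inl h
    · rw [Finset.mem_union]
      constructor
      · rintro (h | h)
        · exfalso
          obtain ⟨g1, g2, g3, g4⟩ := hbd _ h
          simp only at g3 g4
          push_cast at g4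
          omega
        · obtain ⟨y, hy, hy1, hy2⟩ := mem_bcol.1 h
          simp only at hy1 hy2
          have : y = x := by exact_mod_cast hy1
          rwa [← this]
      · intro h
        refine Or.inr (mem_bcol.2 ⟨x, h, rfl, ?_⟩)
        simp only
        push_cast
        ring

/-- Sublemma C: the column-`n` state of the extension is `C`. -/
lemma colstate_union (hC : C ⊆ Finset.Icc 1 4) {τ : Finset (ℤ × ℤ)}
    (hτ : ParaConfig 4 n A C τ) :
    colstate (n : ℤ) (τ ∪ bcol ((n : ℤ) + 1) B) = C := by
  obtain ⟨hbd, hind, hbdry⟩ := hτ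
  ext x
  unfold colstate
  rw [Finset.mem_filter, Finset.mem_Icc, Finset.mem_union]
  constructor
  · rintro ⟨⟨hx1, hx4⟩, h | h⟩
    · exact ((hbdry x hx1 hx4).2).1 h
    · exfalso
      obtain ⟨y, hy, hy1, hy2⟩ := mem_bcol.1 h
      simp only at hy1 hy2
      omega
  · intro hx
    have hxI := hC hx
    rw [Finset.mem_Icc] at hxI
    exact ⟨hxI, Or.inl (((hbdry x hxI.1 hxI.2).2).2 hx)⟩

/-- Sublemma D: filtering the extension recovers `τ`. -/
lemma filter_union (hB : B ⊆ Finset.Icc 1 4) {τ : Finset (ℤ × ℤ)}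
    (hτ : ParaConfig 4 n A C τ) :
    ((τ ∪ bcol ((n : ℤ) + 1) B).filter fun p => p.1 + p.2 ≤ (n : ℤ) + 1) = τ := by
  obtain ⟨hbd, hind, hbdry⟩ := hτ
  ext p
  rw [Finset.mem_filter, Finset.mem_union]
  constructor
  · rintro ⟨h | h, hle⟩
    · exact h
    · exfalso
      obtain ⟨y, hy, hy1, hy2⟩ := mem_bcol.1 h
      omega
  · intro hp
    obtain ⟨h1, h2, h3, h4⟩ := hbd p hp
    exact ⟨Or.inl hp, by omega⟩

/-- Sublemma E: a config of `P_{4,n+1}` is the union of its restriction and its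
last column. -/
lemma union_filter (hB : B ⊆ Finset.Icc 1 4) {σ : Finset (ℤ × ℤ)}
    (hσ : ParaConfig 4 (n + 1) A B σ) :
    (σ.filter fun p => p.1 + p.2 ≤ (n : ℤ) + 1) ∪ bcol ((n : ℤ) + 1) B = σ := by
  obtain ⟨hbd, hind, hbdry⟩ := hσ
  ext p
  rw [Finset.mem_union, Finset.mem_filter]
  constructor
  · rintro (⟨h, -⟩ | h)
    · exact h
    · obtain ⟨y, hy, hy1, hy2⟩ := mem_bcol.1 h
      have hyI := hB hy
      rw [Finset.mem_Icc] at hyI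
      have := ((hbdry y hyI.1 hyI.2).2).2 hy
      have hpe : p = ((y : ℤ), 1 - (y : ℤ) + ((n + 1 : ℕ) : ℤ)) := by
        ext
        · simp [← hy1]
        · push_cast
          omega
      rw [hpe]
      exact this
  · intro hp
    obtain ⟨h1, h2, h3, h4⟩ := hbd p hp
    push_cast at h4
    by_cases hle : p.1 + p.2 ≤ (n : ℤ) + 1
    · exact Or.inl ⟨hp, hle⟩
    · right
      have hp2 : p.2 = 1 - p.1 + ((n : ℤ) + 1) := by omega
      have hx1 : 1 ≤ p.1.toNat := by omega
      have hx4 : p.1.toNat ≤ 4 := by omega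
      have hcast : (p.1.toNat : ℤ) = p.1 := by omega
      have hb := ((hbdry p.1.toNat hx1 hx4).2).1
      rw [hcast] at hb
      have hpe : p = (p.1, 1 - p.1 + ((n + 1 : ℕ) : ℤ)) := by
        ext
        · rfl
        · push_cast; omega
      rw [hpe] at hp
      have hyB : p.1.toNat ∈ B := hb hp
      exact mem_bcol.2 ⟨p.1.toNat, hyB, hcast, by omega⟩

/-- Sublemma F: card splitting. -/
lemma card_split (hB : B ⊆ Finset.Icc 1 4) {σ : Finset (ℤ × ℤ)}
    (hσ : ParaConfig 4 (n + 1) A B σ) :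
    σ.card = (σ.filter fun p => p.1 + p.2 ≤ (n : ℤ) + 1).card + B.card := by
  classical
  have h := Finset.card_filter_add_card_filter_not
    (s := σ) (p := fun p => p.1 + p.2 ≤ (n : ℤ) + 1)
  have hneg : (σ.filter fun p => ¬ (p.1 + p.2 ≤ (n : ℤ) + 1)) = bcol ((n : ℤ) + 1) B := by
    have hu := union_filter hB hσ
    obtain ⟨hbd, hind, hbdry⟩ := hσ
    ext p
    rw [Finset.mem_filter]
    constructor
    · rintro ⟨hp, hgt⟩
      have : p ∈ (σ.filter fun p => p.1 + p.2 ≤ (n : ℤ) + 1) ∪ bcol ((n : ℤ) + 1) B := by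
        rw [hu]; exact hp
      rw [Finset.mem_union, Finset.mem_filter] at this
      rcases this with ⟨-, h⟩ | h
      · exact absurd h hgt
      · exact h
    · intro hp
      obtain ⟨y, hy, hy1, hy2⟩ := mem_bcol.1 hp
      constructor
      · rw [← hu, Finset.mem_union]
        exact Or.inr hp
      · omega
  rw [hneg, bcol_card] at h
  omega

lemma Zpara_succ (A : Finset ℕ) (n : ℕ) (hn : 1 ≤ n) (B : Finset ℕ)
    (hB : B ⊆ Finset.Icc 1 4) :
    Zpara 4 (n + 1) A B = stepF (fun C => Zpara 4 n A C) B := by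
  classical
  rw [Zpara_eq]
  rw [← Finset.sum_fiberwise_of_maps_to (g := colstate (n : ℤ)) (t := P4)
      (fun σ _ => Finset.mem_powerset.2 (Finset.filter_subset _ _))]
  unfold stepF
  rw [Finset.mul_sum]
  refine Finset.sum_congr rfl fun C hC => ?_
  have hC4 : C ⊆ Finset.Icc 1 4 := Finset.mem_powerset.1 hC
  by_cases hcb : compat C B
  · rw [if_pos hcb]
    beta_reduce
    rw [Zpara_eq, Finset.mul_sum]
    refine Finset.sum_nbij' (fun σ => σ.filter fun p => p.1 + p.2 ≤ (n : ℤ) + 1)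
      (fun τ => τ ∪ bcol ((n : ℤ) + 1) B) ?_ ?_ ?_ ?_ ?_
    · intro σ hσ
      rw [Finset.mem_filter, Set.Finite.mem_toFinset] at hσ
      rw [Set.Finite.mem_toFinset]
      have := config_filter hn hσ.1
      rwa [hσ.2] at this
    · intro τ hτ
      rw [Set.Finite.mem_toFinset] at hτ
      rw [Finset.mem_filter, Set.Finite.mem_toFinset]
      exact ⟨config_union hn hB hC4 hcb hτ, colstate_union hC4 hτ⟩
    · intro σ hσ
      rw [Finset.mem_filter, Set.Finite.mem_toFinset] at hσ
      exact union_filter hB hσ.1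
    · intro τ hτ
      rw [Set.Finite.mem_toFinset] at hτ
      exact filter_union hB hτ
    · intro σ hσ
      rw [Finset.mem_filter, Set.Finite.mem_toFinset] at hσ
      rw [card_split hB hσ.1, pow_add, mul_comm]
  · rw [if_neg hcb, mul_zero]
    have hempty : ((paraConfig_finite 4 (n + 1) A B).toFinset.filter
        fun σ => colstate (n : ℤ) σ = C) = ∅ := by
      rw [Finset.filter_eq_empty_iff]
      intro σ hσ
      rw [Set.Finite.mem_toFinset] at hσ
      intro hcol
      apply hcb
      intro x hxC
      rw [← hcol] at hxC
      unfold colstate at hxC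
      rw [Finset.mem_filter, Finset.mem_Icc] at hxC
      obtain ⟨⟨hx1, hx4⟩, hmem⟩ := hxC
      obtain ⟨hbd, hind, hbdry⟩ := hσ
      constructor
      · intro hxB
        have h2 := ((hbdry x hx1 hx4).2).2 hxB
        refine hind _ hmem _ h2 ?_
        simp only [gridAdj]
        push_cast
        omega
      · intro hxB
        have hx14 : x + 1 ≤ 4 := by
          have := hB hxB
          rw [Finset.mem_Icc] at this
          omega
        have h2 := ((hbdry (x + 1) (by omega) hx14).2).2 hxB
        refine hind _ hmem _ h2 ?_
        simp only [gridAdj]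
        push_cast
        omega
    rw [hempty, Finset.sum_empty]

end Rec


def Tb1_0 (B : Finset ℕ) : ℤ := if B = (∅ : Finset ℕ) then 0 else if B = ({1} : Finset ℕ) then 1 else if B = ({2} : Finset ℕ) then 0 else if B = ({3} : Finset ℕ) then 0 else if B = ({4} : Finset ℕ) then 0 else if B = ({1, 2} : Finset ℕ) then 0 else if B = ({1, 3} : Finset ℕ) then 0 else if B = ({1, 4} : Finset ℕ) then 0 else if B = ({2, 3} : Finset ℕ) then 0 else if B = ({2, 4} : Finset ℕ) then 0 else if B = ({3, 4} : Finset ℕ) then 0 else if B = ({1, 2, 3} : Finset ℕ) then 0 else if B = ({1, 2, 4} : Finset ℕ) then 0 else if B = ({1, 3, 4} : Finset ℕ) then 0 else if B = ({2, 3, 4} : Finset ℕ) then 0 else 0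
def Tb1_1 (B : Finset ℕ) : ℤ := if B = (∅ : Finset ℕ) then 1 else if B = ({1} : Finset ℕ) then 0 else if B = ({2} : Finset ℕ) then 0 else if B = ({3} : Finset ℕ) then -1 else if B = ({4} : Finset ℕ) then -1 else if B = ({1, 2} : Finset ℕ) then 0 else if B = ({1, 3} : Finset ℕ) then 0 else if B = ({1, 4} : Finset ℕ) then 0 else if B = ({2, 3} : Finset ℕ) then 0 else if B = ({2, 4} : Finset ℕ) then 0 else if B = ({3, 4} : Finset ℕ) then 1 else if B = ({1, 2, 3} : Finset ℕ) then 0 else if B = ({1, 2, 4} : Finset ℕ) then 0 else if B = ({1, 3, 4} : Finset ℕ) then 0 else if B = ({2, 3, 4} : Finset ℕ) then 0 else 0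
def Tb1_2 (B : Finset ℕ) : ℤ := if B = (∅ : Finset ℕ) then 0 else if B = ({1} : Finset ℕ) then 0 else if B = ({2} : Finset ℕ) then 0 else if B = ({3} : Finset ℕ) then 0 else if B = ({4} : Finset ℕ) then -1 else if B = ({1, 2} : Finset ℕ) then 0 else if B = ({1, 3} : Finset ℕ) then 0 else if B = ({1, 4} : Finset ℕ) then 1 else if B = ({2, 3} : Finset ℕ) then 0 else if B = ({2, 4} : Finset ℕ) then 1 else if B = ({3, 4} : Finset ℕ) then 1 else if B = ({1, 2, 3} : Finset ℕ) then 0 else if B = ({1, 2, 4} : Finset ℕ) then -1 else if B = ({1, 3, 4} : Finset ℕ) then -1 else if B = ({2, 3, 4} : Finset ℕ) then -1 else 1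
def Tb1_3 (B : Finset ℕ) : ℤ := if B = (∅ : Finset ℕ) then 0 else if B = ({1} : Finset ℕ) then 0 else if B = ({2} : Finset ℕ) then 0 else if B = ({3} : Finset ℕ) then 0 else if B = ({4} : Finset ℕ) then 0 else if B = ({1, 2} : Finset ℕ) then 0 else if B = ({1, 3} : Finset ℕ) then -1 else if B = ({1, 4} : Finset ℕ) then 0 else if B = ({2, 3} : Finset ℕ) then -1 else if B = ({2, 4} : Finset ℕ) then 0 else if B = ({3, 4} : Finset ℕ) then 0 else if B = ({1, 2, 3} : Finset ℕ) then 1 else if B = ({1, 2, 4} : Finset ℕ) then 0 else if B = ({1, 3, 4} : Finset ℕ) then 0 else if B = ({2, 3, 4} : Finset ℕ) then 0 else 0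
def Tb1_4 (B : Finset ℕ) : ℤ := if B = (∅ : Finset ℕ) then -1 else if B = ({1} : Finset ℕ) then 1 else if B = ({2} : Finset ℕ) then 0 else if B = ({3} : Finset ℕ) then 0 else if B = ({4} : Finset ℕ) then 0 else if B = ({1, 2} : Finset ℕ) then 0 else if B = ({1, 3} : Finset ℕ) then 0 else if B = ({1, 4} : Finset ℕ) then 0 else if B = ({2, 3} : Finset ℕ) then 0 else if B = ({2, 4} : Finset ℕ) then 0 else if B = ({3, 4} : Finset ℕ) then 0 else if B = ({1, 2, 3} : Finset ℕ) then 0 else if B = ({1, 2, 4} : Finset ℕ) then 0 else if B = ({1, 3, 4} : Finset ℕ) then 0 else if B = ({2, 3, 4} : Finset ℕ) then 0 else 0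
def Tb1_5 (B : Finset ℕ) : ℤ := if B = (∅ : Finset ℕ) then 0 else if B = ({1} : Finset ℕ) then 1 else if B = ({2} : Finset ℕ) then 1 else if B = ({3} : Finset ℕ) then 0 else if B = ({4} : Finset ℕ) then 0 else if B = ({1, 2} : Finset ℕ) then -1 else if B = ({1, 3} : Finset ℕ) then -1 else if B = ({1, 4} : Finset ℕ) then -1 else if B = ({2, 3} : Finset ℕ) then -1 else if B = ({2, 4} : Finset ℕ) then -1 else if B = ({3, 4} : Finset ℕ) then 0 else if B = ({1, 2, 3} : Finset ℕ) then 1 else if B = ({1, 2, 4} : Finset ℕ) then 1 else if B = ({1, 3, 4} : Finset ℕ) then 1 else if B = ({2, 3, 4} : Finset ℕ) then 1 else -1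
def Tb1_6 (B : Finset ℕ) : ℤ := if B = (∅ : Finset ℕ) then 0 else if B = ({1} : Finset ℕ) then 0 else if B = ({2} : Finset ℕ) then 0 else if B = ({3} : Finset ℕ) then 0 else if B = ({4} : Finset ℕ) then -1 else if B = ({1, 2} : Finset ℕ) then 0 else if B = ({1, 3} : Finset ℕ) then 0 else if B = ({1, 4} : Finset ℕ) then 1 else if B = ({2, 3} : Finset ℕ) then 0 else if B = ({2, 4} : Finset ℕ) then 0 else if B = ({3, 4} : Finset ℕ) then 1 else if B = ({1, 2, 3} : Finset ℕ) then 0 else if B = ({1, 2, 4} : Finset ℕ) then 0 else if B = ({1, 3, 4} : Finset ℕ) then 0 else if B = ({2, 3, 4} : Finset ℕ) then 0 else 0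
def Tb1_7 (B : Finset ℕ) : ℤ := if B = (∅ : Finset ℕ) then 1 else if B = ({1} : Finset ℕ) then 0 else if B = ({2} : Finset ℕ) then 0 else if B = ({3} : Finset ℕ) then 0 else if B = ({4} : Finset ℕ) then 0 else if B = ({1, 2} : Finset ℕ) then 0 else if B = ({1, 3} : Finset ℕ) then -1 else if B = ({1, 4} : Finset ℕ) then 0 else if B = ({2, 3} : Finset ℕ) then -1 else if B = ({2, 4} : Finset ℕ) then 0 else if B = ({3, 4} : Finset ℕ) then 0 else if B = ({1, 2, 3} : Finset ℕ) then 1 else if B = ({1, 2, 4} : Finset ℕ) then 0 else if B = ({1, 3, 4} : Finset ℕ) then 0 else if B = ({2, 3, 4} : Finset ℕ) then 0 else 0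
def Tb1_8 (B : Finset ℕ) : ℤ := if B = (∅ : Finset ℕ) then 0 else if B = ({1} : Finset ℕ) then 0 else if B = ({2} : Finset ℕ) then -1 else if B = ({3} : Finset ℕ) then -1 else if B = ({4} : Finset ℕ) then -1 else if B = ({1, 2} : Finset ℕ) then 1 else if B = ({1, 3} : Finset ℕ) then 1 else if B = ({1, 4} : Finset ℕ) then 1 else if B = ({2, 3} : Finset ℕ) then 1 else if B = ({2, 4} : Finset ℕ) then 1 else if B = ({3, 4} : Finset ℕ) then 1 else if B = ({1, 2, 3} : Finset ℕ) then -1 else if B = ({1, 2, 4} : Finset ℕ) then -1 else if B = ({1, 3, 4} : Finset ℕ) then -1 else if B = ({2, 3, 4} : Finset ℕ) then -1 else 1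
def Tb1_9 (B : Finset ℕ) : ℤ := if B = (∅ : Finset ℕ) then 0 else if B = ({1} : Finset ℕ) then 1 else if B = ({2} : Finset ℕ) then 1 else if B = ({3} : Finset ℕ) then 0 else if B = ({4} : Finset ℕ) then 0 else if B = ({1, 2} : Finset ℕ) then -1 else if B = ({1, 3} : Finset ℕ) then -1 else if B = ({1, 4} : Finset ℕ) then -1 else if B = ({2, 3} : Finset ℕ) then -1 else if B = ({2, 4} : Finset ℕ) then 0 else if B = ({3, 4} : Finset ℕ) then 0 else if B = ({1, 2, 3} : Finset ℕ) then 1 else if B = ({1, 2, 4} : Finset ℕ) then 0 else if B = ({1, 3, 4} : Finset ℕ) then 0 else if B = ({2, 3, 4} : Finset ℕ) then 0 else 0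

def Tb1 : ℕ → Finset ℕ → ℤ
  | 0 => Tb1_0
  | 1 => Tb1_1
  | 2 => Tb1_2
  | 3 => Tb1_3
  | 4 => Tb1_4
  | 5 => Tb1_5
  | 6 => Tb1_6
  | 7 => Tb1_7
  | 8 => Tb1_8
  | 9 => Tb1_9
  | _ => fun _ => 0

def Tb2_0 (B : Finset ℕ) : ℤ := if B = (∅ : Finset ℕ) then 0 else if B = ({1} : Finset ℕ) then 0 else if B = ({2} : Finset ℕ) then 1 else if B = ({3} : Finset ℕ) then 0 else if B = ({4} : Finset ℕ) then 0 else if B = ({1, 2} : Finset ℕ) then 0 else if B = ({1, 3} : Finset ℕ) then 0 else if B = ({1, 4} : Finset ℕ) then 0 else if B = ({2, 3} : Finset ℕ) then 0 else if B = ({2, 4} : Finset ℕ) then 0 else if B = ({3, 4} : Finset ℕ) then 0 else if B = ({1, 2, 3} : Finset ℕ) then 0 else if B = ({1, 2, 4} : Finset ℕ) then 0 else if B = ({1, 3, 4} : Finset ℕ) then 0 else if B = ({2, 3, 4} : Finset ℕ) then 0 else 0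
def Tb2_1 (B : Finset ℕ) : ℤ := if B = (∅ : Finset ℕ) then 1 else if B = ({1} : Finset ℕ) then -1 else if B = ({2} : Finset ℕ) then 0 else if B = ({3} : Finset ℕ) then 0 else if B = ({4} : Finset ℕ) then -1 else if B = ({1, 2} : Finset ℕ) then 0 else if B = ({1, 3} : Finset ℕ) then 0 else if B = ({1, 4} : Finset ℕ) then 1 else if B = ({2, 3} : Finset ℕ) then 0 else if B = ({2, 4} : Finset ℕ) then 0 else if B = ({3, 4} : Finset ℕ) then 0 else if B = ({1, 2, 3} : Finset ℕ) then 0 else if B = ({1, 2, 4} : Finset ℕ) then 0 else if B = ({1, 3, 4} : Finset ℕ) then 0 else if B = ({2, 3, 4} : Finset ℕ) then 0 else 0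
def Tb2_2 (B : Finset ℕ) : ℤ := if B = (∅ : Finset ℕ) then 0 else if B = ({1} : Finset ℕ) then 0 else if B = ({2} : Finset ℕ) then 0 else if B = ({3} : Finset ℕ) then 0 else if B = ({4} : Finset ℕ) then 0 else if B = ({1, 2} : Finset ℕ) then 0 else if B = ({1, 3} : Finset ℕ) then 0 else if B = ({1, 4} : Finset ℕ) then 1 else if B = ({2, 3} : Finset ℕ) then 0 else if B = ({2, 4} : Finset ℕ) then 1 else if B = ({3, 4} : Finset ℕ) then 0 else if B = ({1, 2, 3} : Finset ℕ) then 0 else if B = ({1, 2, 4} : Finset ℕ) then -1 else if B = ({1, 3, 4} : Finset ℕ) then -1 else if B = ({2, 3, 4} : Finset ℕ) then -1 else 1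
def Tb2_3 (B : Finset ℕ) : ℤ := if B = (∅ : Finset ℕ) then 0 else if B = ({1} : Finset ℕ) then 0 else if B = ({2} : Finset ℕ) then 0 else if B = ({3} : Finset ℕ) then -1 else if B = ({4} : Finset ℕ) then 0 else if B = ({1, 2} : Finset ℕ) then 0 else if B = ({1, 3} : Finset ℕ) then 0 else if B = ({1, 4} : Finset ℕ) then 0 else if B = ({2, 3} : Finset ℕ) then 0 else if B = ({2, 4} : Finset ℕ) then 0 else if B = ({3, 4} : Finset ℕ) then 0 else if B = ({1, 2, 3} : Finset ℕ) then 0 else if B = ({1, 2, 4} : Finset ℕ) then 0 else if B = ({1, 3, 4} : Finset ℕ) then 0 else if B = ({2, 3, 4} : Finset ℕ) then 0 else 0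
def Tb2_4 (B : Finset ℕ) : ℤ := if B = (∅ : Finset ℕ) then -1 else if B = ({1} : Finset ℕ) then 1 else if B = ({2} : Finset ℕ) then 1 else if B = ({3} : Finset ℕ) then 0 else if B = ({4} : Finset ℕ) then 0 else if B = ({1, 2} : Finset ℕ) then -1 else if B = ({1, 3} : Finset ℕ) then 0 else if B = ({1, 4} : Finset ℕ) then 0 else if B = ({2, 3} : Finset ℕ) then 0 else if B = ({2, 4} : Finset ℕ) then 0 else if B = ({3, 4} : Finset ℕ) then 0 else if B = ({1, 2, 3} : Finset ℕ) then 0 else if B = ({1, 2, 4} : Finset ℕ) then 0 else if B = ({1, 3, 4} : Finset ℕ) then 0 else if B = ({2, 3, 4} : Finset ℕ) then 0 else 0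
def Tb2_5 (B : Finset ℕ) : ℤ := if B = (∅ : Finset ℕ) then 0 else if B = ({1} : Finset ℕ) then 0 else if B = ({2} : Finset ℕ) then 1 else if B = ({3} : Finset ℕ) then 0 else if B = ({4} : Finset ℕ) then 0 else if B = ({1, 2} : Finset ℕ) then -1 else if B = ({1, 3} : Finset ℕ) then -1 else if B = ({1, 4} : Finset ℕ) then 0 else if B = ({2, 3} : Finset ℕ) then -1 else if B = ({2, 4} : Finset ℕ) then -1 else if B = ({3, 4} : Finset ℕ) then 0 else if B = ({1, 2, 3} : Finset ℕ) then 1 else if B = ({1, 2, 4} : Finset ℕ) then 1 else if B = ({1, 3, 4} : Finset ℕ) then 1 else if B = ({2, 3, 4} : Finset ℕ) then 1 else -1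
def Tb2_6 (B : Finset ℕ) : ℤ := if B = (∅ : Finset ℕ) then 0 else if B = ({1} : Finset ℕ) then 0 else if B = ({2} : Finset ℕ) then 0 else if B = ({3} : Finset ℕ) then 0 else if B = ({4} : Finset ℕ) then 0 else if B = ({1, 2} : Finset ℕ) then 0 else if B = ({1, 3} : Finset ℕ) then 0 else if B = ({1, 4} : Finset ℕ) then 1 else if B = ({2, 3} : Finset ℕ) then 0 else if B = ({2, 4} : Finset ℕ) then 0 else if B = ({3, 4} : Finset ℕ) then 0 else if B = ({1, 2, 3} : Finset ℕ) then 0 else if B = ({1, 2, 4} : Finset ℕ) then 0 else if B = ({1, 3, 4} : Finset ℕ) then 0 else if B = ({2, 3, 4} : Finset ℕ) then 0 else 0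
def Tb2_7 (B : Finset ℕ) : ℤ := if B = (∅ : Finset ℕ) then 1 else if B = ({1} : Finset ℕ) then 0 else if B = ({2} : Finset ℕ) then 0 else if B = ({3} : Finset ℕ) then -1 else if B = ({4} : Finset ℕ) then 0 else if B = ({1, 2} : Finset ℕ) then 0 else if B = ({1, 3} : Finset ℕ) then 0 else if B = ({1, 4} : Finset ℕ) then 0 else if B = ({2, 3} : Finset ℕ) then 0 else if B = ({2, 4} : Finset ℕ) then 0 else if B = ({3, 4} : Finset ℕ) then 0 else if B = ({1, 2, 3} : Finset ℕ) then 0 else if B = ({1, 2, 4} : Finset ℕ) then 0 else if B = ({1, 3, 4} : Finset ℕ) then 0 else if B = ({2, 3, 4} : Finset ℕ) then 0 else 0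
def Tb2_8 (B : Finset ℕ) : ℤ := if B = (∅ : Finset ℕ) then 0 else if B = ({1} : Finset ℕ) then 0 else if B = ({2} : Finset ℕ) then 0 else if B = ({3} : Finset ℕ) then -1 else if B = ({4} : Finset ℕ) then -1 else if B = ({1, 2} : Finset ℕ) then 0 else if B = ({1, 3} : Finset ℕ) then 1 else if B = ({1, 4} : Finset ℕ) then 1 else if B = ({2, 3} : Finset ℕ) then 1 else if B = ({2, 4} : Finset ℕ) then 1 else if B = ({3, 4} : Finset ℕ) then 1 else if B = ({1, 2, 3} : Finset ℕ) then -1 else if B = ({1, 2, 4} : Finset ℕ) then -1 else if B = ({1, 3, 4} : Finset ℕ) then -1 else if B = ({2, 3, 4} : Finset ℕ) then -1 else 1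
def Tb2_9 (B : Finset ℕ) : ℤ := if B = (∅ : Finset ℕ) then 0 else if B = ({1} : Finset ℕ) then 0 else if B = ({2} : Finset ℕ) then 1 else if B = ({3} : Finset ℕ) then 0 else if B = ({4} : Finset ℕ) then 0 else if B = ({1, 2} : Finset ℕ) then -1 else if B = ({1, 3} : Finset ℕ) then -1 else if B = ({1, 4} : Finset ℕ) then 0 else if B = ({2, 3} : Finset ℕ) then -1 else if B = ({2, 4} : Finset ℕ) then 0 else if B = ({3, 4} : Finset ℕ) then 0 else if B = ({1, 2, 3} : Finset ℕ) then 1 else if B = ({1, 2, 4} : Finset ℕ) then 0 else if B = ({1, 3, 4} : Finset ℕ) then 0 else if B = ({2, 3, 4} : Finset ℕ) then 0 else 0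

def Tb2 : ℕ → Finset ℕ → ℤ
  | 0 => Tb2_0
  | 1 => Tb2_1
  | 2 => Tb2_2
  | 3 => Tb2_3
  | 4 => Tb2_4
  | 5 => Tb2_5
  | 6 => Tb2_6
  | 7 => Tb2_7
  | 8 => Tb2_8
  | 9 => Tb2_9
  | _ => fun _ => 0

def Tb3_0 (B : Finset ℕ) : ℤ := if B = (∅ : Finset ℕ) then 0 else if B = ({1} : Finset ℕ) then 0 else if B = ({2} : Finset ℕ) then 0 else if B = ({3} : Finset ℕ) then 1 else if B = ({4} : Finset ℕ) then 0 else if B = ({1, 2} : Finset ℕ) then 0 else if B = ({1, 3} : Finset ℕ) then 0 else if B = ({1, 4} : Finset ℕ) then 0 else if B = ({2, 3} : Finset ℕ) then 0 else if B = ({2, 4} : Finset ℕ) then 0 else if B = ({3, 4} : Finset ℕ) then 0 else if B = ({1, 2, 3} : Finset ℕ) then 0 else if B = ({1, 2, 4} : Finset ℕ) then 0 else if B = ({1, 3, 4} : Finset ℕ) then 0 else if B = ({2, 3, 4} : Finset ℕ) then 0 else 0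
def Tb3_1 (B : Finset ℕ) : ℤ := if B = (∅ : Finset ℕ) then 1 else if B = ({1} : Finset ℕ) then -1 else if B = ({2} : Finset ℕ) then -1 else if B = ({3} : Finset ℕ) then 0 else if B = ({4} : Finset ℕ) then 0 else if B = ({1, 2} : Finset ℕ) then 1 else if B = ({1, 3} : Finset ℕ) then 0 else if B = ({1, 4} : Finset ℕ) then 0 else if B = ({2, 3} : Finset ℕ) then 0 else if B = ({2, 4} : Finset ℕ) then 0 else if B = ({3, 4} : Finset ℕ) then 0 else if B = ({1, 2, 3} : Finset ℕ) then 0 else if B = ({1, 2, 4} : Finset ℕ) then 0 else if B = ({1, 3, 4} : Finset ℕ) then 0 else if B = ({2, 3, 4} : Finset ℕ) then 0 else 0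
def Tb3_2 (B : Finset ℕ) : ℤ := if B = (∅ : Finset ℕ) then 0 else if B = ({1} : Finset ℕ) then 0 else if B = ({2} : Finset ℕ) then -1 else if B = ({3} : Finset ℕ) then 0 else if B = ({4} : Finset ℕ) then 0 else if B = ({1, 2} : Finset ℕ) then 1 else if B = ({1, 3} : Finset ℕ) then 1 else if B = ({1, 4} : Finset ℕ) then 0 else if B = ({2, 3} : Finset ℕ) then 1 else if B = ({2, 4} : Finset ℕ) then 1 else if B = ({3, 4} : Finset ℕ) then 0 else if B = ({1, 2, 3} : Finset ℕ) then -1 else if B = ({1, 2, 4} : Finset ℕ) then -1 else if B = ({1, 3, 4} : Finset ℕ) then -1 else if B = ({2, 3, 4} : Finset ℕ) then -1 else 1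
def Tb3_3 (B : Finset ℕ) : ℤ := if B = (∅ : Finset ℕ) then 0 else if B = ({1} : Finset ℕ) then 0 else if B = ({2} : Finset ℕ) then 0 else if B = ({3} : Finset ℕ) then 0 else if B = ({4} : Finset ℕ) then 0 else if B = ({1, 2} : Finset ℕ) then 0 else if B = ({1, 3} : Finset ℕ) then 0 else if B = ({1, 4} : Finset ℕ) then -1 else if B = ({2, 3} : Finset ℕ) then 0 else if B = ({2, 4} : Finset ℕ) then 0 else if B = ({3, 4} : Finset ℕ) then 0 else if B = ({1, 2, 3} : Finset ℕ) then 0 else if B = ({1, 2, 4} : Finset ℕ) then 0 else if B = ({1, 3, 4} : Finset ℕ) then 0 else if B = ({2, 3, 4} : Finset ℕ) then 0 else 0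
def Tb3_4 (B : Finset ℕ) : ℤ := if B = (∅ : Finset ℕ) then -1 else if B = ({1} : Finset ℕ) then 0 else if B = ({2} : Finset ℕ) then 0 else if B = ({3} : Finset ℕ) then 1 else if B = ({4} : Finset ℕ) then 0 else if B = ({1, 2} : Finset ℕ) then 0 else if B = ({1, 3} : Finset ℕ) then 0 else if B = ({1, 4} : Finset ℕ) then 0 else if B = ({2, 3} : Finset ℕ) then 0 else if B = ({2, 4} : Finset ℕ) then 0 else if B = ({3, 4} : Finset ℕ) then 0 else if B = ({1, 2, 3} : Finset ℕ) then 0 else if B = ({1, 2, 4} : Finset ℕ) then 0 else if B = ({1, 3, 4} : Finset ℕ) then 0 else if B = ({2, 3, 4} : Finset ℕ) then 0 else 0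
def Tb3_5 (B : Finset ℕ) : ℤ := if B = (∅ : Finset ℕ) then 0 else if B = ({1} : Finset ℕ) then 0 else if B = ({2} : Finset ℕ) then 0 else if B = ({3} : Finset ℕ) then 1 else if B = ({4} : Finset ℕ) then 1 else if B = ({1, 2} : Finset ℕ) then 0 else if B = ({1, 3} : Finset ℕ) then -1 else if B = ({1, 4} : Finset ℕ) then -1 else if B = ({2, 3} : Finset ℕ) then -1 else if B = ({2, 4} : Finset ℕ) then -1 else if B = ({3, 4} : Finset ℕ) then -1 else if B = ({1, 2, 3} : Finset ℕ) then 1 else if B = ({1, 2, 4} : Finset ℕ) then 1 else if B = ({1, 3, 4} : Finset ℕ) then 1 else if B = ({2, 3, 4} : Finset ℕ) then 1 else -1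
def Tb3_6 (B : Finset ℕ) : ℤ := if B = (∅ : Finset ℕ) then 0 else if B = ({1} : Finset ℕ) then 0 else if B = ({2} : Finset ℕ) then -1 else if B = ({3} : Finset ℕ) then 0 else if B = ({4} : Finset ℕ) then 0 else if B = ({1, 2} : Finset ℕ) then 1 else if B = ({1, 3} : Finset ℕ) then 1 else if B = ({1, 4} : Finset ℕ) then 0 else if B = ({2, 3} : Finset ℕ) then 1 else if B = ({2, 4} : Finset ℕ) then 0 else if B = ({3, 4} : Finset ℕ) then 0 else if B = ({1, 2, 3} : Finset ℕ) then -1 else if B = ({1, 2, 4} : Finset ℕ) then 0 else if B = ({1, 3, 4} : Finset ℕ) then 0 else if B = ({2, 3, 4} : Finset ℕ) then 0 else 0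
def Tb3_7 (B : Finset ℕ) : ℤ := if B = (∅ : Finset ℕ) then 1 else if B = ({1} : Finset ℕ) then 0 else if B = ({2} : Finset ℕ) then 0 else if B = ({3} : Finset ℕ) then 0 else if B = ({4} : Finset ℕ) then 0 else if B = ({1, 2} : Finset ℕ) then 0 else if B = ({1, 3} : Finset ℕ) then 0 else if B = ({1, 4} : Finset ℕ) then -1 else if B = ({2, 3} : Finset ℕ) then 0 else if B = ({2, 4} : Finset ℕ) then 0 else if B = ({3, 4} : Finset ℕ) then 0 else if B = ({1, 2, 3} : Finset ℕ) then 0 else if B = ({1, 2, 4} : Finset ℕ) then 0 else if B = ({1, 3, 4} : Finset ℕ) then 0 else if B = ({2, 3, 4} : Finset ℕ) then 0 else 0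
def Tb3_8 (B : Finset ℕ) : ℤ := if B = (∅ : Finset ℕ) then 0 else if B = ({1} : Finset ℕ) then -1 else if B = ({2} : Finset ℕ) then -1 else if B = ({3} : Finset ℕ) then 0 else if B = ({4} : Finset ℕ) then -1 else if B = ({1, 2} : Finset ℕ) then 1 else if B = ({1, 3} : Finset ℕ) then 1 else if B = ({1, 4} : Finset ℕ) then 1 else if B = ({2, 3} : Finset ℕ) then 1 else if B = ({2, 4} : Finset ℕ) then 1 else if B = ({3, 4} : Finset ℕ) then 1 else if B = ({1, 2, 3} : Finset ℕ) then -1 else if B = ({1, 2, 4} : Finset ℕ) then -1 else if B = ({1, 3, 4} : Finset ℕ) then -1 else if B = ({2, 3, 4} : Finset ℕ) then -1 else 1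
def Tb3_9 (B : Finset ℕ) : ℤ := if B = (∅ : Finset ℕ) then 0 else if B = ({1} : Finset ℕ) then 0 else if B = ({2} : Finset ℕ) then 0 else if B = ({3} : Finset ℕ) then 1 else if B = ({4} : Finset ℕ) then 1 else if B = ({1, 2} : Finset ℕ) then 0 else if B = ({1, 3} : Finset ℕ) then -1 else if B = ({1, 4} : Finset ℕ) then -1 else if B = ({2, 3} : Finset ℕ) then -1 else if B = ({2, 4} : Finset ℕ) then 0 else if B = ({3, 4} : Finset ℕ) then -1 else if B = ({1, 2, 3} : Finset ℕ) then 1 else if B = ({1, 2, 4} : Finset ℕ) then 0 else if B = ({1, 3, 4} : Finset ℕ) then 0 else if B = ({2, 3, 4} : Finset ℕ) then 0 else 0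

def Tb3 : ℕ → Finset ℕ → ℤ
  | 0 => Tb3_0
  | 1 => Tb3_1
  | 2 => Tb3_2
  | 3 => Tb3_3
  | 4 => Tb3_4
  | 5 => Tb3_5
  | 6 => Tb3_6
  | 7 => Tb3_7
  | 8 => Tb3_8
  | 9 => Tb3_9
  | _ => fun _ => 0

def Tb4_0 (B : Finset ℕ) : ℤ := if B = (∅ : Finset ℕ) then 0 else if B = ({1} : Finset ℕ) then 0 else if B = ({2} : Finset ℕ) then 0 else if B = ({3} : Finset ℕ) then 0 else if B = ({4} : Finset ℕ) then 1 else if B = ({1, 2} : Finset ℕ) then 0 else if B = ({1, 3} : Finset ℕ) then 0 else if B = ({1, 4} : Finset ℕ) then 0 else if B = ({2, 3} : Finset ℕ) then 0 else if B = ({2, 4} : Finset ℕ) then 0 else if B = ({3, 4} : Finset ℕ) then 0 else if B = ({1, 2, 3} : Finset ℕ) then 0 else if B = ({1, 2, 4} : Finset ℕ) then 0 else if B = ({1, 3, 4} : Finset ℕ) then 0 else if B = ({2, 3, 4} : Finset ℕ) then 0 else 0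
def Tb4_1 (B : Finset ℕ) : ℤ := if B = (∅ : Finset ℕ) then 1 else if B = ({1} : Finset ℕ) then -1 else if B = ({2} : Finset ℕ) then -1 else if B = ({3} : Finset ℕ) then -1 else if B = ({4} : Finset ℕ) then 0 else if B = ({1, 2} : Finset ℕ) then 1 else if B = ({1, 3} : Finset ℕ) then 1 else if B = ({1, 4} : Finset ℕ) then 0 else if B = ({2, 3} : Finset ℕ) then 1 else if B = ({2, 4} : Finset ℕ) then 0 else if B = ({3, 4} : Finset ℕ) then 0 else if B = ({1, 2, 3} : Finset ℕ) then -1 else if B = ({1, 2, 4} : Finset ℕ) then 0 else if B = ({1, 3, 4} : Finset ℕ) then 0 else if B = ({2, 3, 4} : Finset ℕ) then 0 else 0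
def Tb4_2 (B : Finset ℕ) : ℤ := if B = (∅ : Finset ℕ) then 0 else if B = ({1} : Finset ℕ) then 0 else if B = ({2} : Finset ℕ) then 0 else if B = ({3} : Finset ℕ) then 0 else if B = ({4} : Finset ℕ) then 0 else if B = ({1, 2} : Finset ℕ) then 0 else if B = ({1, 3} : Finset ℕ) then 1 else if B = ({1, 4} : Finset ℕ) then 0 else if B = ({2, 3} : Finset ℕ) then 1 else if B = ({2, 4} : Finset ℕ) then 1 else if B = ({3, 4} : Finset ℕ) then 0 else if B = ({1, 2, 3} : Finset ℕ) then -1 else if B = ({1, 2, 4} : Finset ℕ) then -1 else if B = ({1, 3, 4} : Finset ℕ) then -1 else if B = ({2, 3, 4} : Finset ℕ) then -1 else 1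
def Tb4_3 (B : Finset ℕ) : ℤ := if B = (∅ : Finset ℕ) then 0 else if B = ({1} : Finset ℕ) then -1 else if B = ({2} : Finset ℕ) then 0 else if B = ({3} : Finset ℕ) then 0 else if B = ({4} : Finset ℕ) then 0 else if B = ({1, 2} : Finset ℕ) then 0 else if B = ({1, 3} : Finset ℕ) then 0 else if B = ({1, 4} : Finset ℕ) then 0 else if B = ({2, 3} : Finset ℕ) then 0 else if B = ({2, 4} : Finset ℕ) then 0 else if B = ({3, 4} : Finset ℕ) then 0 else if B = ({1, 2, 3} : Finset ℕ) then 0 else if B = ({1, 2, 4} : Finset ℕ) then 0 else if B = ({1, 3, 4} : Finset ℕ) then 0 else if B = ({2, 3, 4} : Finset ℕ) then 0 else 0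
def Tb4_4 (B : Finset ℕ) : ℤ := if B = (∅ : Finset ℕ) then -1 else if B = ({1} : Finset ℕ) then 0 else if B = ({2} : Finset ℕ) then 0 else if B = ({3} : Finset ℕ) then 1 else if B = ({4} : Finset ℕ) then 1 else if B = ({1, 2} : Finset ℕ) then 0 else if B = ({1, 3} : Finset ℕ) then 0 else if B = ({1, 4} : Finset ℕ) then 0 else if B = ({2, 3} : Finset ℕ) then 0 else if B = ({2, 4} : Finset ℕ) then 0 else if B = ({3, 4} : Finset ℕ) then -1 else if B = ({1, 2, 3} : Finset ℕ) then 0 else if B = ({1, 2, 4} : Finset ℕ) then 0 else if B = ({1, 3, 4} : Finset ℕ) then 0 else if B = ({2, 3, 4} : Finset ℕ) then 0 else 0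
def Tb4_5 (B : Finset ℕ) : ℤ := if B = (∅ : Finset ℕ) then 0 else if B = ({1} : Finset ℕ) then 0 else if B = ({2} : Finset ℕ) then 0 else if B = ({3} : Finset ℕ) then 0 else if B = ({4} : Finset ℕ) then 1 else if B = ({1, 2} : Finset ℕ) then 0 else if B = ({1, 3} : Finset ℕ) then 0 else if B = ({1, 4} : Finset ℕ) then -1 else if B = ({2, 3} : Finset ℕ) then 0 else if B = ({2, 4} : Finset ℕ) then -1 else if B = ({3, 4} : Finset ℕ) then -1 else if B = ({1, 2, 3} : Finset ℕ) then 0 else if B = ({1, 2, 4} : Finset ℕ) then 1 else if B = ({1, 3, 4} : Finset ℕ) then 1 else if B = ({2, 3, 4} : Finset ℕ) then 1 else -1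
def Tb4_6 (B : Finset ℕ) : ℤ := if B = (∅ : Finset ℕ) then 0 else if B = ({1} : Finset ℕ) then 0 else if B = ({2} : Finset ℕ) then 0 else if B = ({3} : Finset ℕ) then 0 else if B = ({4} : Finset ℕ) then 0 else if B = ({1, 2} : Finset ℕ) then 0 else if B = ({1, 3} : Finset ℕ) then 1 else if B = ({1, 4} : Finset ℕ) then 0 else if B = ({2, 3} : Finset ℕ) then 1 else if B = ({2, 4} : Finset ℕ) then 0 else if B = ({3, 4} : Finset ℕ) then 0 else if B = ({1, 2, 3} : Finset ℕ) then -1 else if B = ({1, 2, 4} : Finset ℕ) then 0 else if B = ({1, 3, 4} : Finset ℕ) then 0 else if B = ({2, 3, 4} : Finset ℕ) then 0 else 0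
def Tb4_7 (B : Finset ℕ) : ℤ := if B = (∅ : Finset ℕ) then 1 else if B = ({1} : Finset ℕ) then -1 else if B = ({2} : Finset ℕ) then 0 else if B = ({3} : Finset ℕ) then 0 else if B = ({4} : Finset ℕ) then 0 else if B = ({1, 2} : Finset ℕ) then 0 else if B = ({1, 3} : Finset ℕ) then 0 else if B = ({1, 4} : Finset ℕ) then 0 else if B = ({2, 3} : Finset ℕ) then 0 else if B = ({2, 4} : Finset ℕ) then 0 else if B = ({3, 4} : Finset ℕ) then 0 else if B = ({1, 2, 3} : Finset ℕ) then 0 else if B = ({1, 2, 4} : Finset ℕ) then 0 else if B = ({1, 3, 4} : Finset ℕ) then 0 else if B = ({2, 3, 4} : Finset ℕ) then 0 else 0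
def Tb4_8 (B : Finset ℕ) : ℤ := if B = (∅ : Finset ℕ) then 0 else if B = ({1} : Finset ℕ) then -1 else if B = ({2} : Finset ℕ) then -1 else if B = ({3} : Finset ℕ) then 0 else if B = ({4} : Finset ℕ) then 0 else if B = ({1, 2} : Finset ℕ) then 1 else if B = ({1, 3} : Finset ℕ) then 1 else if B = ({1, 4} : Finset ℕ) then 1 else if B = ({2, 3} : Finset ℕ) then 1 else if B = ({2, 4} : Finset ℕ) then 1 else if B = ({3, 4} : Finset ℕ) then 0 else if B = ({1, 2, 3} : Finset ℕ) then -1 else if B = ({1, 2, 4} : Finset ℕ) then -1 else if B = ({1, 3, 4} : Finset ℕ) then -1 else if B = ({2, 3, 4} : Finset ℕ) then -1 else 1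
def Tb4_9 (B : Finset ℕ) : ℤ := if B = (∅ : Finset ℕ) then 0 else if B = ({1} : Finset ℕ) then 0 else if B = ({2} : Finset ℕ) then 0 else if B = ({3} : Finset ℕ) then 0 else if B = ({4} : Finset ℕ) then 1 else if B = ({1, 2} : Finset ℕ) then 0 else if B = ({1, 3} : Finset ℕ) then 0 else if B = ({1, 4} : Finset ℕ) then -1 else if B = ({2, 3} : Finset ℕ) then 0 else if B = ({2, 4} : Finset ℕ) then 0 else if B = ({3, 4} : Finset ℕ) then -1 else if B = ({1, 2, 3} : Finset ℕ) then 0 else if B = ({1, 2, 4} : Finset ℕ) then 0 else if B = ({1, 3, 4} : Finset ℕ) then 0 else if B = ({2, 3, 4} : Finset ℕ) then 0 else 0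

def Tb4 : ℕ → Finset ℕ → ℤ
  | 0 => Tb4_0
  | 1 => Tb4_1
  | 2 => Tb4_2
  | 3 => Tb4_3
  | 4 => Tb4_4
  | 5 => Tb4_5
  | 6 => Tb4_6
  | 7 => Tb4_7
  | 8 => Tb4_8
  | 9 => Tb4_9
  | _ => fun _ => 0

lemma w_eq_table (a : ℕ) (T : ℕ → Finset ℕ → ℤ)
    (h0 : ∀ B ∈ P4, w a 0 B = T 0 B)
    (hstep : ∀ k < 9, ∀ B ∈ P4, stepF (T k) B = T (k + 1) B) :
    ∀ k ≤ 9, ∀ B ∈ P4, w a k B = T k B := by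
  intro k
  induction k with
  | zero => intro _; exact h0
  | succ k ih =>
    intro hk B hB
    have h1 : w a (k + 1) B = stepF (w a k) B := rfl
    rw [h1, stepF_congr (fun C hC => ih (by omega) C hC) B]
    exact hstep k (by omega) B hB

lemma chain1 : ∀ k ≤ 9, ∀ B ∈ P4, w 1 k B = Tb1 k B :=
  w_eq_table 1 Tb1 (by decide) (by decide)

lemma chain2 : ∀ k ≤ 9, ∀ B ∈ P4, w 2 k B = Tb2 k B :=
  w_eq_table 2 Tb2 (by decide) (by decide)

lemma chain3 : ∀ k ≤ 9, ∀ B ∈ P4, w 3 k B = Tb3 k B :=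
  w_eq_table 3 Tb3 (by decide) (by decide)

lemma chain4 : ∀ k ≤ 9, ∀ B ∈ P4, w 4 k B = Tb4 k B :=
  w_eq_table 4 Tb4 (by decide) (by decide)

lemma w_rec_base (a : ℕ) (ha : a ∈ ({1, 2, 3, 4} : Finset ℕ)) :
    ∀ B ∈ P4, w a 9 B + w a 6 B = w a 5 B + w a 2 B := by
  fin_cases ha <;> intro B hB
  · rw [chain1 9 (by omega) B hB, chain1 6 (by omega) B hB, chain1 5 (by omega) B hB,
      chain1 2 (by omega) B hB]
    revert hB; revert B; decide
  · rw [chain2 9 (by omega) B hB, chain2 6 (by omega) B hB, chain2 5 (by omega) B hB,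
      chain2 2 (by omega) B hB]
    revert hB; revert B; decide
  · rw [chain3 9 (by omega) B hB, chain3 6 (by omega) B hB, chain3 5 (by omega) B hB,
      chain3 2 (by omega) B hB]
    revert hB; revert B; decide
  · rw [chain4 9 (by omega) B hB, chain4 6 (by omega) B hB, chain4 5 (by omega) B hB,
      chain4 2 (by omega) B hB]
    revert hB; revert B; decide

lemma haP (a : ℕ) (ha1 : 1 ≤ a) (ha4 : a ≤ 4) : ({a} : Finset ℕ) ∈ P4 :=
  Finset.mem_powerset.2 (Finset.singleton_subset_iff.2 (Finset.mem_Icc.2 ⟨ha1, ha4⟩))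

lemma w_vals (a : ℕ) (ha : a ∈ ({1, 2, 3, 4} : Finset ℕ)) :
    w a 0 {a} = 1 ∧ w a 1 {a} = 0 ∧ w a 2 {a} = 0 ∧ w a 3 {a} = 0 ∧ w a 4 {a} = 1 ∧
      w a 5 {a} = 1 ∧ w a 6 {a} = 0 ∧ w a 7 {a} = 0 ∧ w a 8 {a} = 0 := by
  fin_cases ha
  · have h := fun k hk => chain1 k hk {1} (haP 1 (by omega) (by omega))
    rw [h 0 (by omega), h 1 (by omega), h 2 (by omega), h 3 (by omega), h 4 (by omega),
      h 5 (by omega), h 6 (by omega), h 7 (by omega), h 8 (by omega)]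
    decide
  · have h := fun k hk => chain2 k hk {2} (haP 2 (by omega) (by omega))
    rw [h 0 (by omega), h 1 (by omega), h 2 (by omega), h 3 (by omega), h 4 (by omega),
      h 5 (by omega), h 6 (by omega), h 7 (by omega), h 8 (by omega)]
    decide
  · have h := fun k hk => chain3 k hk {3} (haP 3 (by omega) (by omega))
    rw [h 0 (by omega), h 1 (by omega), h 2 (by omega), h 3 (by omega), h 4 (by omega),
      h 5 (by omega), h 6 (by omega), h 7 (by omega), h 8 (by omega)]
    decide
  · have h := fun k hk => chain4 k hk {4} (haP 4 (by omega) (by omega))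
    rw [h 0 (by omega), h 1 (by omega), h 2 (by omega), h 3 (by omega), h 4 (by omega),
      h 5 (by omega), h 6 (by omega), h 7 (by omega), h 8 (by omega)]
    decide

lemma w_rec (a : ℕ) (ha : a ∈ ({1, 2, 3, 4} : Finset ℕ)) :
    ∀ k, ∀ B ∈ P4, w a (k + 9) B + w a (k + 6) B = w a (k + 5) B + w a (k + 2) B := by
  intro k
  induction k with
  | zero => exact w_rec_base a ha
  | succ k ih =>
    intro B hB
    have e9 : k + 1 + 9 = (k + 9) + 1 := by omega
    have e6 : k + 1 + 6 = (k + 6) + 1 := by omega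
    have e5 : k + 1 + 5 = (k + 5) + 1 := by omega
    have e2 : k + 1 + 2 = (k + 2) + 1 := by omega
    rw [e9, e6, e5, e2]
    show stepF (w a (k + 9)) B + stepF (w a (k + 6)) B
        = stepF (w a (k + 5)) B + stepF (w a (k + 2)) B
    unfold stepF
    rw [← mul_add, ← mul_add, ← Finset.sum_add_distrib, ← Finset.sum_add_distrib]
    refine congrArg (fun z => (-1 : ℤ) ^ B.card * z) (Finset.sum_congr rfl fun C hC => ?_)
    by_cases h : compat C B
    · simp only [if_pos h]
      exact ih C hC
    · simp only [if_neg h, add_zero]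


lemma zw (a : ℕ) (ha1 : 1 ≤ a) (ha4 : a ≤ 4) :
    ∀ k, ∀ C ∈ P4, Zpara 4 (k + 1) {a} C = - w a k C := by
  intro k
  induction k with
  | zero =>
    intro C hC
    rw [Zpara_one a ha1 ha4 C (Finset.mem_powerset.1 hC)]
    show _ = -(if C = {a} then (1 : ℤ) else 0)
    split_ifs <;> norm_num
  | succ k ih =>
    intro C hC
    rw [Zpara_succ {a} (k + 1) (by omega) C (Finset.mem_powerset.1 hC)]
    rw [stepF_congr (f := fun D => Zpara 4 (k + 1) {a} D) (g := fun D => - w a k D)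
      (fun D hD => ih D hD) C]
    show stepF (fun D => - w a k D) C = - stepF (w a k) C
    unfold stepF
    rw [← mul_neg, ← Finset.sum_neg_distrib]
    refine congrArg (fun z => (-1 : ℤ) ^ C.card * z) (Finset.sum_congr rfl fun D hD => ?_)
    split_ifs <;> simp

lemma coeffG (a : ℕ) (ha1 : 1 ≤ a) (ha4 : a ≤ 4) (k : ℕ) :
    PowerSeries.coeff k (Gser 4 {a}) = w a k {a} := by
  rw [Gser, PowerSeries.coeff_mk]
  rcases k with _ | j
  · simp [w]
  · rw [if_neg (Nat.succ_ne_zero j)]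
    rw [zw a ha1 ha4 (j + 1) {a} (haP a ha1 ha4)]
    simp

end Gaux

/-- For `m = 4` and every singleton `A = {a}` with
`a ∈ {1,2,3,4}`, `G_{A,A}(t)·(1 + t³)(1 − t⁴) = 1 + t³ + t⁵` in `ℤ[[t]]`. -/
theorem Gser_singleton (a : ℕ) (ha : a ∈ ({1, 2, 3, 4} : Finset ℕ)) :
    Gser 4 {a} *
        ((1 + PowerSeries.X ^ 3) * (1 - PowerSeries.X ^ 4)) =
      1 + PowerSeries.X ^ 3 + PowerSeries.X ^ 5 := by
  have ha14 : 1 ≤ a ∧ a ≤ 4 := by fin_cases ha <;> omega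
  obtain ⟨ha1, ha4⟩ := ha14
  obtain ⟨v0, v1, v2, v3, v4, v5, v6, v7, v8⟩ := Gaux.w_vals a ha
  have hrec := fun k => Gaux.w_rec a ha k {a} (Gaux.haP a ha1 ha4)
  have hG := Gaux.coeffG a ha1 ha4
  have expand : Gser 4 {a} * ((1 + PowerSeries.X ^ 3) * (1 - PowerSeries.X ^ 4))
      = Gser 4 {a} + Gser 4 {a} * PowerSeries.X ^ 3 - Gser 4 {a} * PowerSeries.X ^ 4
        - Gser 4 {a} * PowerSeries.X ^ 7 := by ring
  rw [expand]
  ext k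
  rw [map_sub, map_sub, map_add, map_add, map_add]
  rw [PowerSeries.coeff_mul_X_pow', PowerSeries.coeff_mul_X_pow',
    PowerSeries.coeff_mul_X_pow']
  rw [PowerSeries.coeff_one, PowerSeries.coeff_X_pow, PowerSeries.coeff_X_pow]
  simp only [hG]
  rcases Nat.lt_or_ge k 9 with hk | hk
  · interval_cases k <;> norm_num [v0, v1, v2, v3, v4, v5, v6, v7, v8]
  · rw [if_pos (by omega : 3 ≤ k), if_pos (by omega : 4 ≤ k), if_pos (by omega : 7 ≤ k),
      if_neg (by omega : ¬ k = 0), if_neg (by omega : ¬ k = 3), if_neg (by omega : ¬ k = 5)]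
    have e3 : k - 3 = (k - 9) + 6 := by omega
    have e4 : k - 4 = (k - 9) + 5 := by omega
    have e7 : k - 7 = (k - 9) + 2 := by omega
    have e9 : (k - 9) + 9 = k := by omega
    rw [e3, e4, e7]
    have h := hrec (k - 9)
    rw [e9] at h
    linarith [h]
end

section
/- For m = 4 and A = {1,4}, the formal power series identity G_{A,A}(t) · (1 + t³)(1 − t⁴) = 1 + t² + t³ holds in ℤ[[t]]; equivalently, G_{{1,4},{1,4}}(t) = (1 + t² + t³)/((1 + t³)(1 − t⁴)). -/
def compat (S T : Finset ℕ) : Prop := ∀ a ∈ S, a ∉ T ∧ a + 1 ∉ T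
instance (S T : Finset ℕ) : Decidable (compat S T) := Finset.decidableDforallFinset

def wstep (f : Finset ℕ → ℤ) (B : Finset ℕ) : ℤ :=
  (-1) ^ B.card * ∑ S ∈ (Finset.Icc 1 4).powerset, if compat S B then f S else 0

def w : ℕ → Finset ℕ → ℤ
  | 0, B => if B = {1, 4} then 1 else 0
  | n + 1, B => wstep (w n) B

lemma w_succ (m : ℕ) (B : Finset ℕ) : w (m + 1) B = wstep (w m) B := rfl

lemma sum_pow (f : Finset ℕ → ℤ) :
    ∑ S ∈ (Finset.Icc 1 4).powerset, f S =
      f ∅ + f {1} + f {2} + f {3} + f {4} + f {1,2} + f {1,3} + f {1,4} + f {2,3} + f {2,4}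
        + f {3,4} + f {1,2,3} + f {1,2,4} + f {1,3,4} + f {2,3,4} + f {1,2,3,4} := by
  rw [show (Finset.Icc 1 4).powerset =
      ({∅, {1}, {2}, {3}, {4}, {1,2}, {1,3}, {1,4}, {2,3}, {2,4}, {3,4}, {1,2,3}, {1,2,4},
        {1,3,4}, {2,3,4}, {1,2,3,4}} : Finset (Finset ℕ)) from by decide]
  repeat rw [Finset.sum_insert (by decide)]
  rw [Finset.sum_singleton]
  ring

lemma w0_s0 : w 0 (∅ : Finset ℕ) = 0 := by decide

lemma w0_s1 : w 0 ({1} : Finset ℕ) = 0 := by decide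

lemma w0_s2 : w 0 ({2} : Finset ℕ) = 0 := by decide

lemma w0_s3 : w 0 ({3} : Finset ℕ) = 0 := by decide

lemma w0_s4 : w 0 ({4} : Finset ℕ) = 0 := by decide

lemma w0_s12 : w 0 ({1,2} : Finset ℕ) = 0 := by decide

lemma w0_s13 : w 0 ({1,3} : Finset ℕ) = 0 := by decide

lemma w0_s14 : w 0 ({1,4} : Finset ℕ) = 1 := by decide

lemma w0_s23 : w 0 ({2,3} : Finset ℕ) = 0 := by decide

lemma w0_s24 : w 0 ({2,4} : Finset ℕ) = 0 := by decide

lemma w0_s34 : w 0 ({3,4} : Finset ℕ) = 0 := by decide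

lemma w0_s123 : w 0 ({1,2,3} : Finset ℕ) = 0 := by decide

lemma w0_s124 : w 0 ({1,2,4} : Finset ℕ) = 0 := by decide

lemma w0_s134 : w 0 ({1,3,4} : Finset ℕ) = 0 := by decide

lemma w0_s234 : w 0 ({2,3,4} : Finset ℕ) = 0 := by decide

lemma w0_s1234 : w 0 ({1,2,3,4} : Finset ℕ) = 0 := by decide

lemma w1_s0 : w 1 (∅ : Finset ℕ) = 1 := by
  rw [show w 1 (∅ : Finset ℕ) = wstep (w 0) (∅ : Finset ℕ) from rfl, wstep, sum_pow]
  simp only [w0_s0, w0_s1, w0_s2, w0_s3, w0_s4, w0_s12, w0_s13, w0_s14, w0_s23, w0_s24, w0_s34, w0_s123, w0_s124, w0_s134, w0_s234, w0_s1234]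
  decide

lemma w1_s1 : w 1 ({1} : Finset ℕ) = 0 := by
  rw [show w 1 ({1} : Finset ℕ) = wstep (w 0) ({1} : Finset ℕ) from rfl, wstep, sum_pow]
  simp only [w0_s0, w0_s1, w0_s2, w0_s3, w0_s4, w0_s12, w0_s13, w0_s14, w0_s23, w0_s24, w0_s34, w0_s123, w0_s124, w0_s134, w0_s234, w0_s1234]
  decide

lemma w1_s2 : w 1 ({2} : Finset ℕ) = 0 := by
  rw [show w 1 ({2} : Finset ℕ) = wstep (w 0) ({2} : Finset ℕ) from rfl, wstep, sum_pow]
  simp only [w0_s0, w0_s1, w0_s2, w0_s3, w0_s4, w0_s12, w0_s13, w0_s14, w0_s23, w0_s24, w0_s34, w0_s123, w0_s124, w0_s134, w0_s234, w0_s1234]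
  decide

lemma w1_s3 : w 1 ({3} : Finset ℕ) = -1 := by
  rw [show w 1 ({3} : Finset ℕ) = wstep (w 0) ({3} : Finset ℕ) from rfl, wstep, sum_pow]
  simp only [w0_s0, w0_s1, w0_s2, w0_s3, w0_s4, w0_s12, w0_s13, w0_s14, w0_s23, w0_s24, w0_s34, w0_s123, w0_s124, w0_s134, w0_s234, w0_s1234]
  decide

lemma w1_s4 : w 1 ({4} : Finset ℕ) = 0 := by
  rw [show w 1 ({4} : Finset ℕ) = wstep (w 0) ({4} : Finset ℕ) from rfl, wstep, sum_pow]
  simp only [w0_s0, w0_s1, w0_s2, w0_s3, w0_s4, w0_s12, w0_s13, w0_s14, w0_s23, w0_s24, w0_s34, w0_s123, w0_s124, w0_s134, w0_s234, w0_s1234]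
  decide

lemma w1_s12 : w 1 ({1,2} : Finset ℕ) = 0 := by
  rw [show w 1 ({1,2} : Finset ℕ) = wstep (w 0) ({1,2} : Finset ℕ) from rfl, wstep, sum_pow]
  simp only [w0_s0, w0_s1, w0_s2, w0_s3, w0_s4, w0_s12, w0_s13, w0_s14, w0_s23, w0_s24, w0_s34, w0_s123, w0_s124, w0_s134, w0_s234, w0_s1234]
  decide

lemma w1_s13 : w 1 ({1,3} : Finset ℕ) = 0 := by
  rw [show w 1 ({1,3} : Finset ℕ) = wstep (w 0) ({1,3} : Finset ℕ) from rfl, wstep, sum_pow]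
  simp only [w0_s0, w0_s1, w0_s2, w0_s3, w0_s4, w0_s12, w0_s13, w0_s14, w0_s23, w0_s24, w0_s34, w0_s123, w0_s124, w0_s134, w0_s234, w0_s1234]
  decide

lemma w1_s14 : w 1 ({1,4} : Finset ℕ) = 0 := by
  rw [show w 1 ({1,4} : Finset ℕ) = wstep (w 0) ({1,4} : Finset ℕ) from rfl, wstep, sum_pow]
  simp only [w0_s0, w0_s1, w0_s2, w0_s3, w0_s4, w0_s12, w0_s13, w0_s14, w0_s23, w0_s24, w0_s34, w0_s123, w0_s124, w0_s134, w0_s234, w0_s1234]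
  decide

lemma w1_s23 : w 1 ({2,3} : Finset ℕ) = 0 := by
  rw [show w 1 ({2,3} : Finset ℕ) = wstep (w 0) ({2,3} : Finset ℕ) from rfl, wstep, sum_pow]
  simp only [w0_s0, w0_s1, w0_s2, w0_s3, w0_s4, w0_s12, w0_s13, w0_s14, w0_s23, w0_s24, w0_s34, w0_s123, w0_s124, w0_s134, w0_s234, w0_s1234]
  decide

lemma w1_s24 : w 1 ({2,4} : Finset ℕ) = 0 := by
  rw [show w 1 ({2,4} : Finset ℕ) = wstep (w 0) ({2,4} : Finset ℕ) from rfl, wstep, sum_pow]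
  simp only [w0_s0, w0_s1, w0_s2, w0_s3, w0_s4, w0_s12, w0_s13, w0_s14, w0_s23, w0_s24, w0_s34, w0_s123, w0_s124, w0_s134, w0_s234, w0_s1234]
  decide

lemma w1_s34 : w 1 ({3,4} : Finset ℕ) = 0 := by
  rw [show w 1 ({3,4} : Finset ℕ) = wstep (w 0) ({3,4} : Finset ℕ) from rfl, wstep, sum_pow]
  simp only [w0_s0, w0_s1, w0_s2, w0_s3, w0_s4, w0_s12, w0_s13, w0_s14, w0_s23, w0_s24, w0_s34, w0_s123, w0_s124, w0_s134, w0_s234, w0_s1234]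
  decide

lemma w1_s123 : w 1 ({1,2,3} : Finset ℕ) = 0 := by
  rw [show w 1 ({1,2,3} : Finset ℕ) = wstep (w 0) ({1,2,3} : Finset ℕ) from rfl, wstep, sum_pow]
  simp only [w0_s0, w0_s1, w0_s2, w0_s3, w0_s4, w0_s12, w0_s13, w0_s14, w0_s23, w0_s24, w0_s34, w0_s123, w0_s124, w0_s134, w0_s234, w0_s1234]
  decide

lemma w1_s124 : w 1 ({1,2,4} : Finset ℕ) = 0 := by
  rw [show w 1 ({1,2,4} : Finset ℕ) = wstep (w 0) ({1,2,4} : Finset ℕ) from rfl, wstep, sum_pow]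
  simp only [w0_s0, w0_s1, w0_s2, w0_s3, w0_s4, w0_s12, w0_s13, w0_s14, w0_s23, w0_s24, w0_s34, w0_s123, w0_s124, w0_s134, w0_s234, w0_s1234]
  decide

lemma w1_s134 : w 1 ({1,3,4} : Finset ℕ) = 0 := by
  rw [show w 1 ({1,3,4} : Finset ℕ) = wstep (w 0) ({1,3,4} : Finset ℕ) from rfl, wstep, sum_pow]
  simp only [w0_s0, w0_s1, w0_s2, w0_s3, w0_s4, w0_s12, w0_s13, w0_s14, w0_s23, w0_s24, w0_s34, w0_s123, w0_s124, w0_s134, w0_s234, w0_s1234]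
  decide

lemma w1_s234 : w 1 ({2,3,4} : Finset ℕ) = 0 := by
  rw [show w 1 ({2,3,4} : Finset ℕ) = wstep (w 0) ({2,3,4} : Finset ℕ) from rfl, wstep, sum_pow]
  simp only [w0_s0, w0_s1, w0_s2, w0_s3, w0_s4, w0_s12, w0_s13, w0_s14, w0_s23, w0_s24, w0_s34, w0_s123, w0_s124, w0_s134, w0_s234, w0_s1234]
  decide

lemma w1_s1234 : w 1 ({1,2,3,4} : Finset ℕ) = 0 := by
  rw [show w 1 ({1,2,3,4} : Finset ℕ) = wstep (w 0) ({1,2,3,4} : Finset ℕ) from rfl, wstep, sum_pow]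
  simp only [w0_s0, w0_s1, w0_s2, w0_s3, w0_s4, w0_s12, w0_s13, w0_s14, w0_s23, w0_s24, w0_s34, w0_s123, w0_s124, w0_s134, w0_s234, w0_s1234]
  decide

lemma w2_s0 : w 2 (∅ : Finset ℕ) = 0 := by
  rw [show w 2 (∅ : Finset ℕ) = wstep (w 1) (∅ : Finset ℕ) from rfl, wstep, sum_pow]
  simp only [w1_s0, w1_s1, w1_s2, w1_s3, w1_s4, w1_s12, w1_s13, w1_s14, w1_s23, w1_s24, w1_s34, w1_s123, w1_s124, w1_s134, w1_s234, w1_s1234]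
  decide

lemma w2_s1 : w 2 ({1} : Finset ℕ) = 0 := by
  rw [show w 2 ({1} : Finset ℕ) = wstep (w 1) ({1} : Finset ℕ) from rfl, wstep, sum_pow]
  simp only [w1_s0, w1_s1, w1_s2, w1_s3, w1_s4, w1_s12, w1_s13, w1_s14, w1_s23, w1_s24, w1_s34, w1_s123, w1_s124, w1_s134, w1_s234, w1_s1234]
  decide

lemma w2_s2 : w 2 ({2} : Finset ℕ) = 0 := by
  rw [show w 2 ({2} : Finset ℕ) = wstep (w 1) ({2} : Finset ℕ) from rfl, wstep, sum_pow]
  simp only [w1_s0, w1_s1, w1_s2, w1_s3, w1_s4, w1_s12, w1_s13, w1_s14, w1_s23, w1_s24, w1_s34, w1_s123, w1_s124, w1_s134, w1_s234, w1_s1234]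
  decide

lemma w2_s3 : w 2 ({3} : Finset ℕ) = -1 := by
  rw [show w 2 ({3} : Finset ℕ) = wstep (w 1) ({3} : Finset ℕ) from rfl, wstep, sum_pow]
  simp only [w1_s0, w1_s1, w1_s2, w1_s3, w1_s4, w1_s12, w1_s13, w1_s14, w1_s23, w1_s24, w1_s34, w1_s123, w1_s124, w1_s134, w1_s234, w1_s1234]
  decide

lemma w2_s4 : w 2 ({4} : Finset ℕ) = -1 := by
  rw [show w 2 ({4} : Finset ℕ) = wstep (w 1) ({4} : Finset ℕ) from rfl, wstep, sum_pow]
  simp only [w1_s0, w1_s1, w1_s2, w1_s3, w1_s4, w1_s12, w1_s13, w1_s14, w1_s23, w1_s24, w1_s34, w1_s123, w1_s124, w1_s134, w1_s234, w1_s1234]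
  decide

lemma w2_s12 : w 2 ({1,2} : Finset ℕ) = 0 := by
  rw [show w 2 ({1,2} : Finset ℕ) = wstep (w 1) ({1,2} : Finset ℕ) from rfl, wstep, sum_pow]
  simp only [w1_s0, w1_s1, w1_s2, w1_s3, w1_s4, w1_s12, w1_s13, w1_s14, w1_s23, w1_s24, w1_s34, w1_s123, w1_s124, w1_s134, w1_s234, w1_s1234]
  decide

lemma w2_s13 : w 2 ({1,3} : Finset ℕ) = 1 := by
  rw [show w 2 ({1,3} : Finset ℕ) = wstep (w 1) ({1,3} : Finset ℕ) from rfl, wstep, sum_pow]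
  simp only [w1_s0, w1_s1, w1_s2, w1_s3, w1_s4, w1_s12, w1_s13, w1_s14, w1_s23, w1_s24, w1_s34, w1_s123, w1_s124, w1_s134, w1_s234, w1_s1234]
  decide

lemma w2_s14 : w 2 ({1,4} : Finset ℕ) = 1 := by
  rw [show w 2 ({1,4} : Finset ℕ) = wstep (w 1) ({1,4} : Finset ℕ) from rfl, wstep, sum_pow]
  simp only [w1_s0, w1_s1, w1_s2, w1_s3, w1_s4, w1_s12, w1_s13, w1_s14, w1_s23, w1_s24, w1_s34, w1_s123, w1_s124, w1_s134, w1_s234, w1_s1234]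
  decide

lemma w2_s23 : w 2 ({2,3} : Finset ℕ) = 1 := by
  rw [show w 2 ({2,3} : Finset ℕ) = wstep (w 1) ({2,3} : Finset ℕ) from rfl, wstep, sum_pow]
  simp only [w1_s0, w1_s1, w1_s2, w1_s3, w1_s4, w1_s12, w1_s13, w1_s14, w1_s23, w1_s24, w1_s34, w1_s123, w1_s124, w1_s134, w1_s234, w1_s1234]
  decide

lemma w2_s24 : w 2 ({2,4} : Finset ℕ) = 1 := by
  rw [show w 2 ({2,4} : Finset ℕ) = wstep (w 1) ({2,4} : Finset ℕ) from rfl, wstep, sum_pow]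
  simp only [w1_s0, w1_s1, w1_s2, w1_s3, w1_s4, w1_s12, w1_s13, w1_s14, w1_s23, w1_s24, w1_s34, w1_s123, w1_s124, w1_s134, w1_s234, w1_s1234]
  decide

lemma w2_s34 : w 2 ({3,4} : Finset ℕ) = 1 := by
  rw [show w 2 ({3,4} : Finset ℕ) = wstep (w 1) ({3,4} : Finset ℕ) from rfl, wstep, sum_pow]
  simp only [w1_s0, w1_s1, w1_s2, w1_s3, w1_s4, w1_s12, w1_s13, w1_s14, w1_s23, w1_s24, w1_s34, w1_s123, w1_s124, w1_s134, w1_s234, w1_s1234]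
  decide

lemma w2_s123 : w 2 ({1,2,3} : Finset ℕ) = -1 := by
  rw [show w 2 ({1,2,3} : Finset ℕ) = wstep (w 1) ({1,2,3} : Finset ℕ) from rfl, wstep, sum_pow]
  simp only [w1_s0, w1_s1, w1_s2, w1_s3, w1_s4, w1_s12, w1_s13, w1_s14, w1_s23, w1_s24, w1_s34, w1_s123, w1_s124, w1_s134, w1_s234, w1_s1234]
  decide

lemma w2_s124 : w 2 ({1,2,4} : Finset ℕ) = -1 := by
  rw [show w 2 ({1,2,4} : Finset ℕ) = wstep (w 1) ({1,2,4} : Finset ℕ) from rfl, wstep, sum_pow]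
  simp only [w1_s0, w1_s1, w1_s2, w1_s3, w1_s4, w1_s12, w1_s13, w1_s14, w1_s23, w1_s24, w1_s34, w1_s123, w1_s124, w1_s134, w1_s234, w1_s1234]
  decide

lemma w2_s134 : w 2 ({1,3,4} : Finset ℕ) = -1 := by
  rw [show w 2 ({1,3,4} : Finset ℕ) = wstep (w 1) ({1,3,4} : Finset ℕ) from rfl, wstep, sum_pow]
  simp only [w1_s0, w1_s1, w1_s2, w1_s3, w1_s4, w1_s12, w1_s13, w1_s14, w1_s23, w1_s24, w1_s34, w1_s123, w1_s124, w1_s134, w1_s234, w1_s1234]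
  decide

lemma w2_s234 : w 2 ({2,3,4} : Finset ℕ) = -1 := by
  rw [show w 2 ({2,3,4} : Finset ℕ) = wstep (w 1) ({2,3,4} : Finset ℕ) from rfl, wstep, sum_pow]
  simp only [w1_s0, w1_s1, w1_s2, w1_s3, w1_s4, w1_s12, w1_s13, w1_s14, w1_s23, w1_s24, w1_s34, w1_s123, w1_s124, w1_s134, w1_s234, w1_s1234]
  decide

lemma w2_s1234 : w 2 ({1,2,3,4} : Finset ℕ) = 1 := by
  rw [show w 2 ({1,2,3,4} : Finset ℕ) = wstep (w 1) ({1,2,3,4} : Finset ℕ) from rfl, wstep, sum_pow]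
  simp only [w1_s0, w1_s1, w1_s2, w1_s3, w1_s4, w1_s12, w1_s13, w1_s14, w1_s23, w1_s24, w1_s34, w1_s123, w1_s124, w1_s134, w1_s234, w1_s1234]
  decide

lemma w3_s0 : w 3 (∅ : Finset ℕ) = 0 := by
  rw [show w 3 (∅ : Finset ℕ) = wstep (w 2) (∅ : Finset ℕ) from rfl, wstep, sum_pow]
  simp only [w2_s0, w2_s1, w2_s2, w2_s3, w2_s4, w2_s12, w2_s13, w2_s14, w2_s23, w2_s24, w2_s34, w2_s123, w2_s124, w2_s134, w2_s234, w2_s1234]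
  decide

lemma w3_s1 : w 3 ({1} : Finset ℕ) = 0 := by
  rw [show w 3 ({1} : Finset ℕ) = wstep (w 2) ({1} : Finset ℕ) from rfl, wstep, sum_pow]
  simp only [w2_s0, w2_s1, w2_s2, w2_s3, w2_s4, w2_s12, w2_s13, w2_s14, w2_s23, w2_s24, w2_s34, w2_s123, w2_s124, w2_s134, w2_s234, w2_s1234]
  decide

lemma w3_s2 : w 3 ({2} : Finset ℕ) = 1 := by
  rw [show w 3 ({2} : Finset ℕ) = wstep (w 2) ({2} : Finset ℕ) from rfl, wstep, sum_pow]
  simp only [w2_s0, w2_s1, w2_s2, w2_s3, w2_s4, w2_s12, w2_s13, w2_s14, w2_s23, w2_s24, w2_s34, w2_s123, w2_s124, w2_s134, w2_s234, w2_s1234]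
  decide

lemma w3_s3 : w 3 ({3} : Finset ℕ) = 0 := by
  rw [show w 3 ({3} : Finset ℕ) = wstep (w 2) ({3} : Finset ℕ) from rfl, wstep, sum_pow]
  simp only [w2_s0, w2_s1, w2_s2, w2_s3, w2_s4, w2_s12, w2_s13, w2_s14, w2_s23, w2_s24, w2_s34, w2_s123, w2_s124, w2_s134, w2_s234, w2_s1234]
  decide

lemma w3_s4 : w 3 ({4} : Finset ℕ) = 0 := by
  rw [show w 3 ({4} : Finset ℕ) = wstep (w 2) ({4} : Finset ℕ) from rfl, wstep, sum_pow]
  simp only [w2_s0, w2_s1, w2_s2, w2_s3, w2_s4, w2_s12, w2_s13, w2_s14, w2_s23, w2_s24, w2_s34, w2_s123, w2_s124, w2_s134, w2_s234, w2_s1234]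
  decide

lemma w3_s12 : w 3 ({1,2} : Finset ℕ) = -1 := by
  rw [show w 3 ({1,2} : Finset ℕ) = wstep (w 2) ({1,2} : Finset ℕ) from rfl, wstep, sum_pow]
  simp only [w2_s0, w2_s1, w2_s2, w2_s3, w2_s4, w2_s12, w2_s13, w2_s14, w2_s23, w2_s24, w2_s34, w2_s123, w2_s124, w2_s134, w2_s234, w2_s1234]
  decide

lemma w3_s13 : w 3 ({1,3} : Finset ℕ) = -1 := by
  rw [show w 3 ({1,3} : Finset ℕ) = wstep (w 2) ({1,3} : Finset ℕ) from rfl, wstep, sum_pow]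
  simp only [w2_s0, w2_s1, w2_s2, w2_s3, w2_s4, w2_s12, w2_s13, w2_s14, w2_s23, w2_s24, w2_s34, w2_s123, w2_s124, w2_s134, w2_s234, w2_s1234]
  decide

lemma w3_s14 : w 3 ({1,4} : Finset ℕ) = 0 := by
  rw [show w 3 ({1,4} : Finset ℕ) = wstep (w 2) ({1,4} : Finset ℕ) from rfl, wstep, sum_pow]
  simp only [w2_s0, w2_s1, w2_s2, w2_s3, w2_s4, w2_s12, w2_s13, w2_s14, w2_s23, w2_s24, w2_s34, w2_s123, w2_s124, w2_s134, w2_s234, w2_s1234]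
  decide

lemma w3_s23 : w 3 ({2,3} : Finset ℕ) = -1 := by
  rw [show w 3 ({2,3} : Finset ℕ) = wstep (w 2) ({2,3} : Finset ℕ) from rfl, wstep, sum_pow]
  simp only [w2_s0, w2_s1, w2_s2, w2_s3, w2_s4, w2_s12, w2_s13, w2_s14, w2_s23, w2_s24, w2_s34, w2_s123, w2_s124, w2_s134, w2_s234, w2_s1234]
  decide

lemma w3_s24 : w 3 ({2,4} : Finset ℕ) = 0 := by
  rw [show w 3 ({2,4} : Finset ℕ) = wstep (w 2) ({2,4} : Finset ℕ) from rfl, wstep, sum_pow]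
  simp only [w2_s0, w2_s1, w2_s2, w2_s3, w2_s4, w2_s12, w2_s13, w2_s14, w2_s23, w2_s24, w2_s34, w2_s123, w2_s124, w2_s134, w2_s234, w2_s1234]
  decide

lemma w3_s34 : w 3 ({3,4} : Finset ℕ) = 0 := by
  rw [show w 3 ({3,4} : Finset ℕ) = wstep (w 2) ({3,4} : Finset ℕ) from rfl, wstep, sum_pow]
  simp only [w2_s0, w2_s1, w2_s2, w2_s3, w2_s4, w2_s12, w2_s13, w2_s14, w2_s23, w2_s24, w2_s34, w2_s123, w2_s124, w2_s134, w2_s234, w2_s1234]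
  decide

lemma w3_s123 : w 3 ({1,2,3} : Finset ℕ) = 1 := by
  rw [show w 3 ({1,2,3} : Finset ℕ) = wstep (w 2) ({1,2,3} : Finset ℕ) from rfl, wstep, sum_pow]
  simp only [w2_s0, w2_s1, w2_s2, w2_s3, w2_s4, w2_s12, w2_s13, w2_s14, w2_s23, w2_s24, w2_s34, w2_s123, w2_s124, w2_s134, w2_s234, w2_s1234]
  decide

lemma w3_s124 : w 3 ({1,2,4} : Finset ℕ) = 0 := by
  rw [show w 3 ({1,2,4} : Finset ℕ) = wstep (w 2) ({1,2,4} : Finset ℕ) from rfl, wstep, sum_pow]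
  simp only [w2_s0, w2_s1, w2_s2, w2_s3, w2_s4, w2_s12, w2_s13, w2_s14, w2_s23, w2_s24, w2_s34, w2_s123, w2_s124, w2_s134, w2_s234, w2_s1234]
  decide

lemma w3_s134 : w 3 ({1,3,4} : Finset ℕ) = 0 := by
  rw [show w 3 ({1,3,4} : Finset ℕ) = wstep (w 2) ({1,3,4} : Finset ℕ) from rfl, wstep, sum_pow]
  simp only [w2_s0, w2_s1, w2_s2, w2_s3, w2_s4, w2_s12, w2_s13, w2_s14, w2_s23, w2_s24, w2_s34, w2_s123, w2_s124, w2_s134, w2_s234, w2_s1234]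
  decide

lemma w3_s234 : w 3 ({2,3,4} : Finset ℕ) = 0 := by
  rw [show w 3 ({2,3,4} : Finset ℕ) = wstep (w 2) ({2,3,4} : Finset ℕ) from rfl, wstep, sum_pow]
  simp only [w2_s0, w2_s1, w2_s2, w2_s3, w2_s4, w2_s12, w2_s13, w2_s14, w2_s23, w2_s24, w2_s34, w2_s123, w2_s124, w2_s134, w2_s234, w2_s1234]
  decide

lemma w3_s1234 : w 3 ({1,2,3,4} : Finset ℕ) = 0 := by
  rw [show w 3 ({1,2,3,4} : Finset ℕ) = wstep (w 2) ({1,2,3,4} : Finset ℕ) from rfl, wstep, sum_pow]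
  simp only [w2_s0, w2_s1, w2_s2, w2_s3, w2_s4, w2_s12, w2_s13, w2_s14, w2_s23, w2_s24, w2_s34, w2_s123, w2_s124, w2_s134, w2_s234, w2_s1234]
  decide

lemma w4_s0 : w 4 (∅ : Finset ℕ) = -1 := by
  rw [show w 4 (∅ : Finset ℕ) = wstep (w 3) (∅ : Finset ℕ) from rfl, wstep, sum_pow]
  simp only [w3_s0, w3_s1, w3_s2, w3_s3, w3_s4, w3_s12, w3_s13, w3_s14, w3_s23, w3_s24, w3_s34, w3_s123, w3_s124, w3_s134, w3_s234, w3_s1234]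
  decide

lemma w4_s1 : w 4 ({1} : Finset ℕ) = 0 := by
  rw [show w 4 ({1} : Finset ℕ) = wstep (w 3) ({1} : Finset ℕ) from rfl, wstep, sum_pow]
  simp only [w3_s0, w3_s1, w3_s2, w3_s3, w3_s4, w3_s12, w3_s13, w3_s14, w3_s23, w3_s24, w3_s34, w3_s123, w3_s124, w3_s134, w3_s234, w3_s1234]
  decide

lemma w4_s2 : w 4 ({2} : Finset ℕ) = 0 := by
  rw [show w 4 ({2} : Finset ℕ) = wstep (w 3) ({2} : Finset ℕ) from rfl, wstep, sum_pow]
  simp only [w3_s0, w3_s1, w3_s2, w3_s3, w3_s4, w3_s12, w3_s13, w3_s14, w3_s23, w3_s24, w3_s34, w3_s123, w3_s124, w3_s134, w3_s234, w3_s1234]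
  decide

lemma w4_s3 : w 4 ({3} : Finset ℕ) = 0 := by
  rw [show w 4 ({3} : Finset ℕ) = wstep (w 3) ({3} : Finset ℕ) from rfl, wstep, sum_pow]
  simp only [w3_s0, w3_s1, w3_s2, w3_s3, w3_s4, w3_s12, w3_s13, w3_s14, w3_s23, w3_s24, w3_s34, w3_s123, w3_s124, w3_s134, w3_s234, w3_s1234]
  decide

lemma w4_s4 : w 4 ({4} : Finset ℕ) = 0 := by
  rw [show w 4 ({4} : Finset ℕ) = wstep (w 3) ({4} : Finset ℕ) from rfl, wstep, sum_pow]
  simp only [w3_s0, w3_s1, w3_s2, w3_s3, w3_s4, w3_s12, w3_s13, w3_s14, w3_s23, w3_s24, w3_s34, w3_s123, w3_s124, w3_s134, w3_s234, w3_s1234]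
  decide

lemma w4_s12 : w 4 ({1,2} : Finset ℕ) = 0 := by
  rw [show w 4 ({1,2} : Finset ℕ) = wstep (w 3) ({1,2} : Finset ℕ) from rfl, wstep, sum_pow]
  simp only [w3_s0, w3_s1, w3_s2, w3_s3, w3_s4, w3_s12, w3_s13, w3_s14, w3_s23, w3_s24, w3_s34, w3_s123, w3_s124, w3_s134, w3_s234, w3_s1234]
  decide

lemma w4_s13 : w 4 ({1,3} : Finset ℕ) = 0 := by
  rw [show w 4 ({1,3} : Finset ℕ) = wstep (w 3) ({1,3} : Finset ℕ) from rfl, wstep, sum_pow]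
  simp only [w3_s0, w3_s1, w3_s2, w3_s3, w3_s4, w3_s12, w3_s13, w3_s14, w3_s23, w3_s24, w3_s34, w3_s123, w3_s124, w3_s134, w3_s234, w3_s1234]
  decide

lemma w4_s14 : w 4 ({1,4} : Finset ℕ) = 1 := by
  rw [show w 4 ({1,4} : Finset ℕ) = wstep (w 3) ({1,4} : Finset ℕ) from rfl, wstep, sum_pow]
  simp only [w3_s0, w3_s1, w3_s2, w3_s3, w3_s4, w3_s12, w3_s13, w3_s14, w3_s23, w3_s24, w3_s34, w3_s123, w3_s124, w3_s134, w3_s234, w3_s1234]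
  decide

lemma w4_s23 : w 4 ({2,3} : Finset ℕ) = 0 := by
  rw [show w 4 ({2,3} : Finset ℕ) = wstep (w 3) ({2,3} : Finset ℕ) from rfl, wstep, sum_pow]
  simp only [w3_s0, w3_s1, w3_s2, w3_s3, w3_s4, w3_s12, w3_s13, w3_s14, w3_s23, w3_s24, w3_s34, w3_s123, w3_s124, w3_s134, w3_s234, w3_s1234]
  decide

lemma w4_s24 : w 4 ({2,4} : Finset ℕ) = 0 := by
  rw [show w 4 ({2,4} : Finset ℕ) = wstep (w 3) ({2,4} : Finset ℕ) from rfl, wstep, sum_pow]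
  simp only [w3_s0, w3_s1, w3_s2, w3_s3, w3_s4, w3_s12, w3_s13, w3_s14, w3_s23, w3_s24, w3_s34, w3_s123, w3_s124, w3_s134, w3_s234, w3_s1234]
  decide

lemma w4_s34 : w 4 ({3,4} : Finset ℕ) = 0 := by
  rw [show w 4 ({3,4} : Finset ℕ) = wstep (w 3) ({3,4} : Finset ℕ) from rfl, wstep, sum_pow]
  simp only [w3_s0, w3_s1, w3_s2, w3_s3, w3_s4, w3_s12, w3_s13, w3_s14, w3_s23, w3_s24, w3_s34, w3_s123, w3_s124, w3_s134, w3_s234, w3_s1234]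
  decide

lemma w4_s123 : w 4 ({1,2,3} : Finset ℕ) = 0 := by
  rw [show w 4 ({1,2,3} : Finset ℕ) = wstep (w 3) ({1,2,3} : Finset ℕ) from rfl, wstep, sum_pow]
  simp only [w3_s0, w3_s1, w3_s2, w3_s3, w3_s4, w3_s12, w3_s13, w3_s14, w3_s23, w3_s24, w3_s34, w3_s123, w3_s124, w3_s134, w3_s234, w3_s1234]
  decide

lemma w4_s124 : w 4 ({1,2,4} : Finset ℕ) = 0 := by
  rw [show w 4 ({1,2,4} : Finset ℕ) = wstep (w 3) ({1,2,4} : Finset ℕ) from rfl, wstep, sum_pow]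
  simp only [w3_s0, w3_s1, w3_s2, w3_s3, w3_s4, w3_s12, w3_s13, w3_s14, w3_s23, w3_s24, w3_s34, w3_s123, w3_s124, w3_s134, w3_s234, w3_s1234]
  decide

lemma w4_s134 : w 4 ({1,3,4} : Finset ℕ) = 0 := by
  rw [show w 4 ({1,3,4} : Finset ℕ) = wstep (w 3) ({1,3,4} : Finset ℕ) from rfl, wstep, sum_pow]
  simp only [w3_s0, w3_s1, w3_s2, w3_s3, w3_s4, w3_s12, w3_s13, w3_s14, w3_s23, w3_s24, w3_s34, w3_s123, w3_s124, w3_s134, w3_s234, w3_s1234]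
  decide

lemma w4_s234 : w 4 ({2,3,4} : Finset ℕ) = 0 := by
  rw [show w 4 ({2,3,4} : Finset ℕ) = wstep (w 3) ({2,3,4} : Finset ℕ) from rfl, wstep, sum_pow]
  simp only [w3_s0, w3_s1, w3_s2, w3_s3, w3_s4, w3_s12, w3_s13, w3_s14, w3_s23, w3_s24, w3_s34, w3_s123, w3_s124, w3_s134, w3_s234, w3_s1234]
  decide

lemma w4_s1234 : w 4 ({1,2,3,4} : Finset ℕ) = 0 := by
  rw [show w 4 ({1,2,3,4} : Finset ℕ) = wstep (w 3) ({1,2,3,4} : Finset ℕ) from rfl, wstep, sum_pow]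
  simp only [w3_s0, w3_s1, w3_s2, w3_s3, w3_s4, w3_s12, w3_s13, w3_s14, w3_s23, w3_s24, w3_s34, w3_s123, w3_s124, w3_s134, w3_s234, w3_s1234]
  decide

lemma w5_s0 : w 5 (∅ : Finset ℕ) = 0 := by
  rw [show w 5 (∅ : Finset ℕ) = wstep (w 4) (∅ : Finset ℕ) from rfl, wstep, sum_pow]
  simp only [w4_s0, w4_s1, w4_s2, w4_s3, w4_s4, w4_s12, w4_s13, w4_s14, w4_s23, w4_s24, w4_s34, w4_s123, w4_s124, w4_s134, w4_s234, w4_s1234]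
  decide

lemma w5_s1 : w 5 ({1} : Finset ℕ) = 1 := by
  rw [show w 5 ({1} : Finset ℕ) = wstep (w 4) ({1} : Finset ℕ) from rfl, wstep, sum_pow]
  simp only [w4_s0, w4_s1, w4_s2, w4_s3, w4_s4, w4_s12, w4_s13, w4_s14, w4_s23, w4_s24, w4_s34, w4_s123, w4_s124, w4_s134, w4_s234, w4_s1234]
  decide

lemma w5_s2 : w 5 ({2} : Finset ℕ) = 1 := by
  rw [show w 5 ({2} : Finset ℕ) = wstep (w 4) ({2} : Finset ℕ) from rfl, wstep, sum_pow]
  simp only [w4_s0, w4_s1, w4_s2, w4_s3, w4_s4, w4_s12, w4_s13, w4_s14, w4_s23, w4_s24, w4_s34, w4_s123, w4_s124, w4_s134, w4_s234, w4_s1234]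
  decide

lemma w5_s3 : w 5 ({3} : Finset ℕ) = 0 := by
  rw [show w 5 ({3} : Finset ℕ) = wstep (w 4) ({3} : Finset ℕ) from rfl, wstep, sum_pow]
  simp only [w4_s0, w4_s1, w4_s2, w4_s3, w4_s4, w4_s12, w4_s13, w4_s14, w4_s23, w4_s24, w4_s34, w4_s123, w4_s124, w4_s134, w4_s234, w4_s1234]
  decide

lemma w5_s4 : w 5 ({4} : Finset ℕ) = 1 := by
  rw [show w 5 ({4} : Finset ℕ) = wstep (w 4) ({4} : Finset ℕ) from rfl, wstep, sum_pow]
  simp only [w4_s0, w4_s1, w4_s2, w4_s3, w4_s4, w4_s12, w4_s13, w4_s14, w4_s23, w4_s24, w4_s34, w4_s123, w4_s124, w4_s134, w4_s234, w4_s1234]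
  decide

lemma w5_s12 : w 5 ({1,2} : Finset ℕ) = -1 := by
  rw [show w 5 ({1,2} : Finset ℕ) = wstep (w 4) ({1,2} : Finset ℕ) from rfl, wstep, sum_pow]
  simp only [w4_s0, w4_s1, w4_s2, w4_s3, w4_s4, w4_s12, w4_s13, w4_s14, w4_s23, w4_s24, w4_s34, w4_s123, w4_s124, w4_s134, w4_s234, w4_s1234]
  decide

lemma w5_s13 : w 5 ({1,3} : Finset ℕ) = -1 := by
  rw [show w 5 ({1,3} : Finset ℕ) = wstep (w 4) ({1,3} : Finset ℕ) from rfl, wstep, sum_pow]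
  simp only [w4_s0, w4_s1, w4_s2, w4_s3, w4_s4, w4_s12, w4_s13, w4_s14, w4_s23, w4_s24, w4_s34, w4_s123, w4_s124, w4_s134, w4_s234, w4_s1234]
  decide

lemma w5_s14 : w 5 ({1,4} : Finset ℕ) = -1 := by
  rw [show w 5 ({1,4} : Finset ℕ) = wstep (w 4) ({1,4} : Finset ℕ) from rfl, wstep, sum_pow]
  simp only [w4_s0, w4_s1, w4_s2, w4_s3, w4_s4, w4_s12, w4_s13, w4_s14, w4_s23, w4_s24, w4_s34, w4_s123, w4_s124, w4_s134, w4_s234, w4_s1234]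
  decide

lemma w5_s23 : w 5 ({2,3} : Finset ℕ) = -1 := by
  rw [show w 5 ({2,3} : Finset ℕ) = wstep (w 4) ({2,3} : Finset ℕ) from rfl, wstep, sum_pow]
  simp only [w4_s0, w4_s1, w4_s2, w4_s3, w4_s4, w4_s12, w4_s13, w4_s14, w4_s23, w4_s24, w4_s34, w4_s123, w4_s124, w4_s134, w4_s234, w4_s1234]
  decide

lemma w5_s24 : w 5 ({2,4} : Finset ℕ) = -1 := by
  rw [show w 5 ({2,4} : Finset ℕ) = wstep (w 4) ({2,4} : Finset ℕ) from rfl, wstep, sum_pow]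
  simp only [w4_s0, w4_s1, w4_s2, w4_s3, w4_s4, w4_s12, w4_s13, w4_s14, w4_s23, w4_s24, w4_s34, w4_s123, w4_s124, w4_s134, w4_s234, w4_s1234]
  decide

lemma w5_s34 : w 5 ({3,4} : Finset ℕ) = -1 := by
  rw [show w 5 ({3,4} : Finset ℕ) = wstep (w 4) ({3,4} : Finset ℕ) from rfl, wstep, sum_pow]
  simp only [w4_s0, w4_s1, w4_s2, w4_s3, w4_s4, w4_s12, w4_s13, w4_s14, w4_s23, w4_s24, w4_s34, w4_s123, w4_s124, w4_s134, w4_s234, w4_s1234]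
  decide

lemma w5_s123 : w 5 ({1,2,3} : Finset ℕ) = 1 := by
  rw [show w 5 ({1,2,3} : Finset ℕ) = wstep (w 4) ({1,2,3} : Finset ℕ) from rfl, wstep, sum_pow]
  simp only [w4_s0, w4_s1, w4_s2, w4_s3, w4_s4, w4_s12, w4_s13, w4_s14, w4_s23, w4_s24, w4_s34, w4_s123, w4_s124, w4_s134, w4_s234, w4_s1234]
  decide

lemma w5_s124 : w 5 ({1,2,4} : Finset ℕ) = 1 := by
  rw [show w 5 ({1,2,4} : Finset ℕ) = wstep (w 4) ({1,2,4} : Finset ℕ) from rfl, wstep, sum_pow]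
  simp only [w4_s0, w4_s1, w4_s2, w4_s3, w4_s4, w4_s12, w4_s13, w4_s14, w4_s23, w4_s24, w4_s34, w4_s123, w4_s124, w4_s134, w4_s234, w4_s1234]
  decide

lemma w5_s134 : w 5 ({1,3,4} : Finset ℕ) = 1 := by
  rw [show w 5 ({1,3,4} : Finset ℕ) = wstep (w 4) ({1,3,4} : Finset ℕ) from rfl, wstep, sum_pow]
  simp only [w4_s0, w4_s1, w4_s2, w4_s3, w4_s4, w4_s12, w4_s13, w4_s14, w4_s23, w4_s24, w4_s34, w4_s123, w4_s124, w4_s134, w4_s234, w4_s1234]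
  decide

lemma w5_s234 : w 5 ({2,3,4} : Finset ℕ) = 1 := by
  rw [show w 5 ({2,3,4} : Finset ℕ) = wstep (w 4) ({2,3,4} : Finset ℕ) from rfl, wstep, sum_pow]
  simp only [w4_s0, w4_s1, w4_s2, w4_s3, w4_s4, w4_s12, w4_s13, w4_s14, w4_s23, w4_s24, w4_s34, w4_s123, w4_s124, w4_s134, w4_s234, w4_s1234]
  decide

lemma w5_s1234 : w 5 ({1,2,3,4} : Finset ℕ) = -1 := by
  rw [show w 5 ({1,2,3,4} : Finset ℕ) = wstep (w 4) ({1,2,3,4} : Finset ℕ) from rfl, wstep, sum_pow]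
  simp only [w4_s0, w4_s1, w4_s2, w4_s3, w4_s4, w4_s12, w4_s13, w4_s14, w4_s23, w4_s24, w4_s34, w4_s123, w4_s124, w4_s134, w4_s234, w4_s1234]
  decide

lemma w6_s0 : w 6 (∅ : Finset ℕ) = 0 := by
  rw [show w 6 (∅ : Finset ℕ) = wstep (w 5) (∅ : Finset ℕ) from rfl, wstep, sum_pow]
  simp only [w5_s0, w5_s1, w5_s2, w5_s3, w5_s4, w5_s12, w5_s13, w5_s14, w5_s23, w5_s24, w5_s34, w5_s123, w5_s124, w5_s134, w5_s234, w5_s1234]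
  decide

lemma w6_s1 : w 6 ({1} : Finset ℕ) = 0 := by
  rw [show w 6 ({1} : Finset ℕ) = wstep (w 5) ({1} : Finset ℕ) from rfl, wstep, sum_pow]
  simp only [w5_s0, w5_s1, w5_s2, w5_s3, w5_s4, w5_s12, w5_s13, w5_s14, w5_s23, w5_s24, w5_s34, w5_s123, w5_s124, w5_s134, w5_s234, w5_s1234]
  decide

lemma w6_s2 : w 6 ({2} : Finset ℕ) = 0 := by
  rw [show w 6 ({2} : Finset ℕ) = wstep (w 5) ({2} : Finset ℕ) from rfl, wstep, sum_pow]
  simp only [w5_s0, w5_s1, w5_s2, w5_s3, w5_s4, w5_s12, w5_s13, w5_s14, w5_s23, w5_s24, w5_s34, w5_s123, w5_s124, w5_s134, w5_s234, w5_s1234]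
  decide

lemma w6_s3 : w 6 ({3} : Finset ℕ) = -1 := by
  rw [show w 6 ({3} : Finset ℕ) = wstep (w 5) ({3} : Finset ℕ) from rfl, wstep, sum_pow]
  simp only [w5_s0, w5_s1, w5_s2, w5_s3, w5_s4, w5_s12, w5_s13, w5_s14, w5_s23, w5_s24, w5_s34, w5_s123, w5_s124, w5_s134, w5_s234, w5_s1234]
  decide

lemma w6_s4 : w 6 ({4} : Finset ℕ) = -1 := by
  rw [show w 6 ({4} : Finset ℕ) = wstep (w 5) ({4} : Finset ℕ) from rfl, wstep, sum_pow]
  simp only [w5_s0, w5_s1, w5_s2, w5_s3, w5_s4, w5_s12, w5_s13, w5_s14, w5_s23, w5_s24, w5_s34, w5_s123, w5_s124, w5_s134, w5_s234, w5_s1234]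
  decide

lemma w6_s12 : w 6 ({1,2} : Finset ℕ) = 0 := by
  rw [show w 6 ({1,2} : Finset ℕ) = wstep (w 5) ({1,2} : Finset ℕ) from rfl, wstep, sum_pow]
  simp only [w5_s0, w5_s1, w5_s2, w5_s3, w5_s4, w5_s12, w5_s13, w5_s14, w5_s23, w5_s24, w5_s34, w5_s123, w5_s124, w5_s134, w5_s234, w5_s1234]
  decide

lemma w6_s13 : w 6 ({1,3} : Finset ℕ) = 1 := by
  rw [show w 6 ({1,3} : Finset ℕ) = wstep (w 5) ({1,3} : Finset ℕ) from rfl, wstep, sum_pow]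
  simp only [w5_s0, w5_s1, w5_s2, w5_s3, w5_s4, w5_s12, w5_s13, w5_s14, w5_s23, w5_s24, w5_s34, w5_s123, w5_s124, w5_s134, w5_s234, w5_s1234]
  decide

lemma w6_s14 : w 6 ({1,4} : Finset ℕ) = 1 := by
  rw [show w 6 ({1,4} : Finset ℕ) = wstep (w 5) ({1,4} : Finset ℕ) from rfl, wstep, sum_pow]
  simp only [w5_s0, w5_s1, w5_s2, w5_s3, w5_s4, w5_s12, w5_s13, w5_s14, w5_s23, w5_s24, w5_s34, w5_s123, w5_s124, w5_s134, w5_s234, w5_s1234]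
  decide

lemma w6_s23 : w 6 ({2,3} : Finset ℕ) = 1 := by
  rw [show w 6 ({2,3} : Finset ℕ) = wstep (w 5) ({2,3} : Finset ℕ) from rfl, wstep, sum_pow]
  simp only [w5_s0, w5_s1, w5_s2, w5_s3, w5_s4, w5_s12, w5_s13, w5_s14, w5_s23, w5_s24, w5_s34, w5_s123, w5_s124, w5_s134, w5_s234, w5_s1234]
  decide

lemma w6_s24 : w 6 ({2,4} : Finset ℕ) = 0 := by
  rw [show w 6 ({2,4} : Finset ℕ) = wstep (w 5) ({2,4} : Finset ℕ) from rfl, wstep, sum_pow]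
  simp only [w5_s0, w5_s1, w5_s2, w5_s3, w5_s4, w5_s12, w5_s13, w5_s14, w5_s23, w5_s24, w5_s34, w5_s123, w5_s124, w5_s134, w5_s234, w5_s1234]
  decide

lemma w6_s34 : w 6 ({3,4} : Finset ℕ) = 1 := by
  rw [show w 6 ({3,4} : Finset ℕ) = wstep (w 5) ({3,4} : Finset ℕ) from rfl, wstep, sum_pow]
  simp only [w5_s0, w5_s1, w5_s2, w5_s3, w5_s4, w5_s12, w5_s13, w5_s14, w5_s23, w5_s24, w5_s34, w5_s123, w5_s124, w5_s134, w5_s234, w5_s1234]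
  decide

lemma w6_s123 : w 6 ({1,2,3} : Finset ℕ) = -1 := by
  rw [show w 6 ({1,2,3} : Finset ℕ) = wstep (w 5) ({1,2,3} : Finset ℕ) from rfl, wstep, sum_pow]
  simp only [w5_s0, w5_s1, w5_s2, w5_s3, w5_s4, w5_s12, w5_s13, w5_s14, w5_s23, w5_s24, w5_s34, w5_s123, w5_s124, w5_s134, w5_s234, w5_s1234]
  decide

lemma w6_s124 : w 6 ({1,2,4} : Finset ℕ) = 0 := by
  rw [show w 6 ({1,2,4} : Finset ℕ) = wstep (w 5) ({1,2,4} : Finset ℕ) from rfl, wstep, sum_pow]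
  simp only [w5_s0, w5_s1, w5_s2, w5_s3, w5_s4, w5_s12, w5_s13, w5_s14, w5_s23, w5_s24, w5_s34, w5_s123, w5_s124, w5_s134, w5_s234, w5_s1234]
  decide

lemma w6_s134 : w 6 ({1,3,4} : Finset ℕ) = 0 := by
  rw [show w 6 ({1,3,4} : Finset ℕ) = wstep (w 5) ({1,3,4} : Finset ℕ) from rfl, wstep, sum_pow]
  simp only [w5_s0, w5_s1, w5_s2, w5_s3, w5_s4, w5_s12, w5_s13, w5_s14, w5_s23, w5_s24, w5_s34, w5_s123, w5_s124, w5_s134, w5_s234, w5_s1234]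
  decide

lemma w6_s234 : w 6 ({2,3,4} : Finset ℕ) = 0 := by
  rw [show w 6 ({2,3,4} : Finset ℕ) = wstep (w 5) ({2,3,4} : Finset ℕ) from rfl, wstep, sum_pow]
  simp only [w5_s0, w5_s1, w5_s2, w5_s3, w5_s4, w5_s12, w5_s13, w5_s14, w5_s23, w5_s24, w5_s34, w5_s123, w5_s124, w5_s134, w5_s234, w5_s1234]
  decide

lemma w6_s1234 : w 6 ({1,2,3,4} : Finset ℕ) = 0 := by
  rw [show w 6 ({1,2,3,4} : Finset ℕ) = wstep (w 5) ({1,2,3,4} : Finset ℕ) from rfl, wstep, sum_pow]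
  simp only [w5_s0, w5_s1, w5_s2, w5_s3, w5_s4, w5_s12, w5_s13, w5_s14, w5_s23, w5_s24, w5_s34, w5_s123, w5_s124, w5_s134, w5_s234, w5_s1234]
  decide

lemma w7_s0 : w 7 (∅ : Finset ℕ) = 1 := by
  rw [show w 7 (∅ : Finset ℕ) = wstep (w 6) (∅ : Finset ℕ) from rfl, wstep, sum_pow]
  simp only [w6_s0, w6_s1, w6_s2, w6_s3, w6_s4, w6_s12, w6_s13, w6_s14, w6_s23, w6_s24, w6_s34, w6_s123, w6_s124, w6_s134, w6_s234, w6_s1234]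
  decide

lemma w7_s1 : w 7 ({1} : Finset ℕ) = 0 := by
  rw [show w 7 ({1} : Finset ℕ) = wstep (w 6) ({1} : Finset ℕ) from rfl, wstep, sum_pow]
  simp only [w6_s0, w6_s1, w6_s2, w6_s3, w6_s4, w6_s12, w6_s13, w6_s14, w6_s23, w6_s24, w6_s34, w6_s123, w6_s124, w6_s134, w6_s234, w6_s1234]
  decide

lemma w7_s2 : w 7 ({2} : Finset ℕ) = 1 := by
  rw [show w 7 ({2} : Finset ℕ) = wstep (w 6) ({2} : Finset ℕ) from rfl, wstep, sum_pow]
  simp only [w6_s0, w6_s1, w6_s2, w6_s3, w6_s4, w6_s12, w6_s13, w6_s14, w6_s23, w6_s24, w6_s34, w6_s123, w6_s124, w6_s134, w6_s234, w6_s1234]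
  decide

lemma w7_s3 : w 7 ({3} : Finset ℕ) = 0 := by
  rw [show w 7 ({3} : Finset ℕ) = wstep (w 6) ({3} : Finset ℕ) from rfl, wstep, sum_pow]
  simp only [w6_s0, w6_s1, w6_s2, w6_s3, w6_s4, w6_s12, w6_s13, w6_s14, w6_s23, w6_s24, w6_s34, w6_s123, w6_s124, w6_s134, w6_s234, w6_s1234]
  decide

lemma w7_s4 : w 7 ({4} : Finset ℕ) = 0 := by
  rw [show w 7 ({4} : Finset ℕ) = wstep (w 6) ({4} : Finset ℕ) from rfl, wstep, sum_pow]
  simp only [w6_s0, w6_s1, w6_s2, w6_s3, w6_s4, w6_s12, w6_s13, w6_s14, w6_s23, w6_s24, w6_s34, w6_s123, w6_s124, w6_s134, w6_s234, w6_s1234]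
  decide

lemma w7_s12 : w 7 ({1,2} : Finset ℕ) = -1 := by
  rw [show w 7 ({1,2} : Finset ℕ) = wstep (w 6) ({1,2} : Finset ℕ) from rfl, wstep, sum_pow]
  simp only [w6_s0, w6_s1, w6_s2, w6_s3, w6_s4, w6_s12, w6_s13, w6_s14, w6_s23, w6_s24, w6_s34, w6_s123, w6_s124, w6_s134, w6_s234, w6_s1234]
  decide

lemma w7_s13 : w 7 ({1,3} : Finset ℕ) = -1 := by
  rw [show w 7 ({1,3} : Finset ℕ) = wstep (w 6) ({1,3} : Finset ℕ) from rfl, wstep, sum_pow]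
  simp only [w6_s0, w6_s1, w6_s2, w6_s3, w6_s4, w6_s12, w6_s13, w6_s14, w6_s23, w6_s24, w6_s34, w6_s123, w6_s124, w6_s134, w6_s234, w6_s1234]
  decide

lemma w7_s14 : w 7 ({1,4} : Finset ℕ) = 0 := by
  rw [show w 7 ({1,4} : Finset ℕ) = wstep (w 6) ({1,4} : Finset ℕ) from rfl, wstep, sum_pow]
  simp only [w6_s0, w6_s1, w6_s2, w6_s3, w6_s4, w6_s12, w6_s13, w6_s14, w6_s23, w6_s24, w6_s34, w6_s123, w6_s124, w6_s134, w6_s234, w6_s1234]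
  decide

lemma w7_s23 : w 7 ({2,3} : Finset ℕ) = -1 := by
  rw [show w 7 ({2,3} : Finset ℕ) = wstep (w 6) ({2,3} : Finset ℕ) from rfl, wstep, sum_pow]
  simp only [w6_s0, w6_s1, w6_s2, w6_s3, w6_s4, w6_s12, w6_s13, w6_s14, w6_s23, w6_s24, w6_s34, w6_s123, w6_s124, w6_s134, w6_s234, w6_s1234]
  decide

lemma w7_s24 : w 7 ({2,4} : Finset ℕ) = 0 := by
  rw [show w 7 ({2,4} : Finset ℕ) = wstep (w 6) ({2,4} : Finset ℕ) from rfl, wstep, sum_pow]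
  simp only [w6_s0, w6_s1, w6_s2, w6_s3, w6_s4, w6_s12, w6_s13, w6_s14, w6_s23, w6_s24, w6_s34, w6_s123, w6_s124, w6_s134, w6_s234, w6_s1234]
  decide

lemma w7_s34 : w 7 ({3,4} : Finset ℕ) = 0 := by
  rw [show w 7 ({3,4} : Finset ℕ) = wstep (w 6) ({3,4} : Finset ℕ) from rfl, wstep, sum_pow]
  simp only [w6_s0, w6_s1, w6_s2, w6_s3, w6_s4, w6_s12, w6_s13, w6_s14, w6_s23, w6_s24, w6_s34, w6_s123, w6_s124, w6_s134, w6_s234, w6_s1234]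
  decide

lemma w7_s123 : w 7 ({1,2,3} : Finset ℕ) = 1 := by
  rw [show w 7 ({1,2,3} : Finset ℕ) = wstep (w 6) ({1,2,3} : Finset ℕ) from rfl, wstep, sum_pow]
  simp only [w6_s0, w6_s1, w6_s2, w6_s3, w6_s4, w6_s12, w6_s13, w6_s14, w6_s23, w6_s24, w6_s34, w6_s123, w6_s124, w6_s134, w6_s234, w6_s1234]
  decide

lemma w7_s124 : w 7 ({1,2,4} : Finset ℕ) = 0 := by
  rw [show w 7 ({1,2,4} : Finset ℕ) = wstep (w 6) ({1,2,4} : Finset ℕ) from rfl, wstep, sum_pow]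
  simp only [w6_s0, w6_s1, w6_s2, w6_s3, w6_s4, w6_s12, w6_s13, w6_s14, w6_s23, w6_s24, w6_s34, w6_s123, w6_s124, w6_s134, w6_s234, w6_s1234]
  decide

lemma w7_s134 : w 7 ({1,3,4} : Finset ℕ) = 0 := by
  rw [show w 7 ({1,3,4} : Finset ℕ) = wstep (w 6) ({1,3,4} : Finset ℕ) from rfl, wstep, sum_pow]
  simp only [w6_s0, w6_s1, w6_s2, w6_s3, w6_s4, w6_s12, w6_s13, w6_s14, w6_s23, w6_s24, w6_s34, w6_s123, w6_s124, w6_s134, w6_s234, w6_s1234]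
  decide

lemma w7_s234 : w 7 ({2,3,4} : Finset ℕ) = 0 := by
  rw [show w 7 ({2,3,4} : Finset ℕ) = wstep (w 6) ({2,3,4} : Finset ℕ) from rfl, wstep, sum_pow]
  simp only [w6_s0, w6_s1, w6_s2, w6_s3, w6_s4, w6_s12, w6_s13, w6_s14, w6_s23, w6_s24, w6_s34, w6_s123, w6_s124, w6_s134, w6_s234, w6_s1234]
  decide

lemma w7_s1234 : w 7 ({1,2,3,4} : Finset ℕ) = 0 := by
  rw [show w 7 ({1,2,3,4} : Finset ℕ) = wstep (w 6) ({1,2,3,4} : Finset ℕ) from rfl, wstep, sum_pow]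
  simp only [w6_s0, w6_s1, w6_s2, w6_s3, w6_s4, w6_s12, w6_s13, w6_s14, w6_s23, w6_s24, w6_s34, w6_s123, w6_s124, w6_s134, w6_s234, w6_s1234]
  decide

lemma mem_powerset_cases (B : Finset ℕ) (hB : B ∈ (Finset.Icc 1 4).powerset) :
    B = (∅ : Finset ℕ) ∨ B = ({1} : Finset ℕ) ∨ B = ({2} : Finset ℕ) ∨ B = ({3} : Finset ℕ) ∨ B = ({4} : Finset ℕ) ∨ B = ({1,2} : Finset ℕ) ∨ B = ({1,3} : Finset ℕ) ∨ B = ({1,4} : Finset ℕ) ∨ B = ({2,3} : Finset ℕ) ∨ B = ({2,4} : Finset ℕ) ∨ B = ({3,4} : Finset ℕ) ∨ B = ({1,2,3} : Finset ℕ) ∨ B = ({1,2,4} : Finset ℕ) ∨ B = ({1,3,4} : Finset ℕ) ∨ B = ({2,3,4} : Finset ℕ) ∨ B = ({1,2,3,4} : Finset ℕ) := by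
  rw [show (Finset.Icc 1 4).powerset =
      ({∅, {1}, {2}, {3}, {4}, {1,2}, {1,3}, {1,4}, {2,3}, {2,4}, {3,4}, {1,2,3}, {1,2,4},
        {1,3,4}, {2,3,4}, {1,2,3,4}} : Finset (Finset ℕ)) from by decide] at hB
  simpa using hB

lemma wrec : ∀ k : ℕ, ∀ B ∈ (Finset.Icc 1 4).powerset,
    w (k + 7) B + w (k + 4) B = w (k + 3) B + w k B := by
  intro k
  induction k with
  | zero =>
    intro B hB
    rcases mem_powerset_cases B hB with rfl|rfl|rfl|rfl|rfl|rfl|rfl|rfl|rfl|rfl|rfl|rfl|rfl|rfl|rfl|rfl <;>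
      norm_num [w0_s0, w0_s1, w0_s2, w0_s3, w0_s4, w0_s12, w0_s13, w0_s14, w0_s23, w0_s24, w0_s34, w0_s123, w0_s124, w0_s134, w0_s234, w0_s1234, w3_s0, w3_s1, w3_s2, w3_s3, w3_s4, w3_s12, w3_s13, w3_s14, w3_s23, w3_s24, w3_s34, w3_s123, w3_s124, w3_s134, w3_s234, w3_s1234, w4_s0, w4_s1, w4_s2, w4_s3, w4_s4, w4_s12, w4_s13, w4_s14, w4_s23, w4_s24, w4_s34, w4_s123, w4_s124, w4_s134, w4_s234, w4_s1234, w7_s0, w7_s1, w7_s2, w7_s3, w7_s4, w7_s12, w7_s13, w7_s14, w7_s23, w7_s24, w7_s34, w7_s123, w7_s124, w7_s134, w7_s234, w7_s1234]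
  | succ k ih =>
    intro B hB
    rw [show k + 1 + 7 = (k + 7) + 1 from by omega, show k + 1 + 4 = (k + 4) + 1 from by omega,
      show k + 1 + 3 = (k + 3) + 1 from by omega, w_succ, w_succ, w_succ, w_succ, wstep, wstep,
      wstep, wstep, ← mul_add, ← mul_add, ← Finset.sum_add_distrib, ← Finset.sum_add_distrib]
    have hsum : ∀ u v x y : ℕ, (∀ B ∈ (Finset.Icc 1 4).powerset, w u B + w v B = w x B + w y B) →
        (∑ S ∈ (Finset.Icc 1 4).powerset,
          ((if compat S B then w u S else 0) + if compat S B then w v S else 0)) =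
        ∑ S ∈ (Finset.Icc 1 4).powerset,
          ((if compat S B then w x S else 0) + if compat S B then w y S else 0) := by
      intro u v x y hw
      apply Finset.sum_congr rfl
      intro S hS
      by_cases h : compat S B
      · simp only [if_pos h]; exact hw S hS
      · simp only [if_neg h, add_zero]
    rw [hsum _ _ _ _ ih]

instance (v w : ℤ × ℤ) : Decidable (gridAdj v w) := Nat.decEq _ _

lemma config_finite (m n : ℕ) (A B : Finset ℕ) :
    {σ : Finset (ℤ × ℤ) | ParaConfig m n A B σ}.Finite := by
  apply Set.Finite.subset
    ((Finset.Icc (1 : ℤ) (m : ℤ) ×ˢ Finset.Icc (1 - (m : ℤ)) (n : ℤ)).powerset.finite_toSet)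
  intro σ hσ
  simp only [Finset.coe_powerset, Set.mem_preimage, Set.mem_powerset_iff, Finset.coe_subset]
  rw [Finset.subset_iff]
  rintro ⟨x, y⟩ hp
  have h := hσ.1 ⟨x, y⟩ hp
  simp only at h
  rw [Finset.mem_product, Finset.mem_Icc, Finset.mem_Icc]
  constructor <;> constructor <;> omega

noncomputable def Cfin (m n : ℕ) (A B : Finset ℕ) : Finset (Finset (ℤ × ℤ)) :=
  (config_finite m n A B).toFinset

lemma Zpara_eq_sum (m n : ℕ) (A B : Finset ℕ) :
    Zpara m n A B = ∑ σ ∈ Cfin m n A B, (-1 : ℤ) ^ σ.card :=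
  finsum_mem_eq_finite_toFinset_sum _ _

lemma Zpara_one (B : Finset ℕ) (hB : B ⊆ Finset.Icc 1 4) :
    Zpara 4 1 {1, 4} B = if B = {1, 4} then 1 else 0 := by
  by_cases hb : B = {1, 4}
  · subst hb
    rw [if_pos rfl, Zpara]
    have hset : {σ : Finset (ℤ × ℤ) | ParaConfig 4 1 {1, 4} {1, 4} σ}
        = {({((1:ℤ), (1:ℤ)), ((4:ℤ), (-2:ℤ))} : Finset (ℤ × ℤ))} := by
      ext σ
      simp only [Set.mem_setOf_eq, Set.mem_singleton_iff]
      constructor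
      · rintro ⟨hdom, hind, hbd⟩
        apply Finset.ext
        rintro ⟨x, y⟩
        constructor
        · intro hp
          have h := hdom ⟨x, y⟩ hp
          simp only at h
          -- y = 2 - x forced
          obtain ⟨a, ha⟩ : ∃ a : ℕ, (a : ℤ) = x := ⟨x.toNat, by omega⟩
          have ha1 : 1 ≤ a := by omega
          have ha4 : a ≤ 4 := by omega
          have hpt : ((a : ℤ), 2 - (a : ℤ)) = ((x : ℤ), y) := by
            rw [Prod.mk.injEq]; constructor <;> push_cast <;> omega
          have : a ∈ ({1, 4} : Finset ℕ) := (hbd a ha1 ha4).1.mp (by rw [hpt]; exact hp)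
          simp only [Finset.mem_insert, Finset.mem_singleton] at this
          rcases this with rfl | rfl <;>
            simp only [Finset.mem_insert, Finset.mem_singleton, Prod.mk.injEq] <;> omega
        · intro hp
          simp only [Finset.mem_insert, Finset.mem_singleton, Prod.mk.injEq] at hp
          rcases hp with ⟨rfl, rfl⟩ | ⟨rfl, rfl⟩
          · have := (hbd 1 le_rfl (by norm_num)).1.mpr (by decide)
            simpa using this
          · have := (hbd 4 (by norm_num) le_rfl).1.mpr (by decide)
            simpa using this
      · rintro rfl
        refine ⟨by decide, by decide, ?_⟩
        intro a h1 h4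
        interval_cases a <;> constructor <;> decide
    rw [hset, finsum_mem_singleton]
    decide
  · rw [if_neg hb, Zpara]
    have hset : {σ : Finset (ℤ × ℤ) | ParaConfig 4 1 {1, 4} B σ} = ∅ := by
      ext σ
      simp only [Set.mem_setOf_eq, Set.mem_empty_iff_false, iff_false]
      rintro ⟨hdom, hind, hbd⟩
      apply hb
      apply Finset.ext
      intro a
      constructor
      · intro haB
        have h14 := Finset.mem_Icc.mp (hB haB)
        have hbd' := hbd a h14.1 h14.2
        have hpt : ((a : ℤ), 1 - (a : ℤ) + ((1 : ℕ) : ℤ)) = ((a : ℤ), 2 - (a : ℤ)) := by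
          rw [Prod.mk.injEq]; constructor <;> push_cast <;> omega
        exact hbd'.1.mp (by rw [← hpt]; exact hbd'.2.mpr haB)
      · intro haA
        have h14 : 1 ≤ a ∧ a ≤ 4 := by
          simp only [Finset.mem_insert, Finset.mem_singleton] at haA
          rcases haA with rfl | rfl <;> omega
        have hbd' := hbd a h14.1 h14.2
        have hpt : ((a : ℤ), 1 - (a : ℤ) + ((1 : ℕ) : ℤ)) = ((a : ℤ), 2 - (a : ℤ)) := by
          rw [Prod.mk.injEq]; constructor <;> push_cast <;> omega
        exact hbd'.2.mp (by rw [hpt]; exact hbd'.1.mpr haA)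
    rw [hset, finsum_mem_empty]

def colF (n : ℕ) (B : Finset ℕ) : Finset (ℤ × ℤ) :=
  B.image fun a : ℕ => ((a : ℤ), 2 + (n : ℤ) - (a : ℤ))

lemma mem_colF {n : ℕ} {B : Finset ℕ} {p : ℤ × ℤ} :
    p ∈ colF n B ↔ ∃ a ∈ B, ((a : ℤ), 2 + (n : ℤ) - (a : ℤ)) = p := by
  simp [colF]

lemma card_colF (n : ℕ) (B : Finset ℕ) : (colF n B).card = B.card :=
  Finset.card_image_of_injective _ (fun a b h => by
    have : (a : ℤ) = (b : ℤ) := congrArg Prod.fst h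
    exact_mod_cast this)

def Sof (n : ℕ) (σ : Finset (ℤ × ℤ)) : Finset ℕ :=
  (Finset.Icc 1 4).filter fun a => ((a : ℤ), 1 - (a : ℤ) + (n : ℤ)) ∈ σ

def Phi (n : ℕ) (σ : Finset (ℤ × ℤ)) : Finset (ℤ × ℤ) :=
  σ.filter fun p => p.2 ≤ 1 - p.1 + (n : ℤ)

lemma gridAdj_comm {v w : ℤ × ℤ} : gridAdj v w ↔ gridAdj w v := by
  unfold gridAdj; omega

/-- The last column of a config of width `n+1` is exactly `colF n B`. -/
lemma colF_eq {n : ℕ} {B : Finset ℕ} {σ : Finset (ℤ × ℤ)} (hB : B ⊆ Finset.Icc 1 4)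
    (hσ : ParaConfig 4 (n + 1) {1, 4} B σ) :
    σ.filter (fun p => ¬ p.2 ≤ 1 - p.1 + (n : ℤ)) = colF n B := by
  obtain ⟨hdom, hind, hbd⟩ := hσ
  apply Finset.ext
  rintro ⟨x, y⟩
  rw [Finset.mem_filter, mem_colF]
  constructor
  · rintro ⟨hp, hy⟩
    have h := hdom ⟨x, y⟩ hp
    simp only at h hy
    obtain ⟨a, ha⟩ : ∃ a : ℕ, (a : ℤ) = x := ⟨x.toNat, by omega⟩
    have ha1 : 1 ≤ a := by omega
    have ha4 : a ≤ 4 := by omega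
    refine ⟨a, ?_, ?_⟩
    · apply ((hbd a ha1 ha4).2).mp
      have hpt : ((a : ℤ), 1 - (a : ℤ) + ((n + 1 : ℕ) : ℤ)) = ((x : ℤ), y) := by
        rw [Prod.mk.injEq]; constructor <;> push_cast <;> omega
      rw [hpt]; exact hp
    · rw [Prod.mk.injEq]; push_cast at h ⊢; constructor <;> omega
  · rintro ⟨a, haB, he⟩
    rw [Prod.mk.injEq] at he
    have h14 := Finset.mem_Icc.mp (hB haB)
    have hm := ((hbd a h14.1 h14.2).2).mpr haB
    have hpt : ((a : ℤ), 1 - (a : ℤ) + ((n + 1 : ℕ) : ℤ)) = ((x : ℤ), y) := by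
      rw [Prod.mk.injEq]; constructor <;> push_cast <;> omega
    rw [hpt] at hm
    refine ⟨hm, ?_⟩
    simp only
    omega

/-- Peeling: the restriction is a config of width `n`, with compatible last column. -/
lemma config_peel {n : ℕ} (hn : 1 ≤ n) {B : Finset ℕ} {σ : Finset (ℤ × ℤ)}
    (hB : B ⊆ Finset.Icc 1 4) (hσ : ParaConfig 4 (n + 1) {1, 4} B σ) :
    ParaConfig 4 n {1, 4} (Sof n σ) (Phi n σ) ∧
      (∀ a ∈ Sof n σ, a ∉ B ∧ a + 1 ∉ B) := by
  obtain ⟨hdom, hind, hbd⟩ := hσ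
  constructor
  · refine ⟨?_, ?_, ?_⟩
    · rintro ⟨x, y⟩ hp
      rw [Phi, Finset.mem_filter] at hp
      have h := hdom ⟨x, y⟩ hp.1
      have h2 := hp.2
      simp only at h h2 ⊢
      refine ⟨by omega, by omega, by omega, h2⟩
    · intro v hv w hw
      rw [Phi, Finset.mem_filter] at hv hw
      exact hind v hv.1 w hw.1
    · intro a h1 h4
      constructor
      · rw [Phi, Finset.mem_filter]
        rw [← (hbd a h1 h4).1]
        constructor
        · rintro ⟨hp, _⟩; exact hp
        · intro hp; refine ⟨hp, ?_⟩; simp only; omega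
      · rw [Phi, Finset.mem_filter, Sof, Finset.mem_filter]
        constructor
        · rintro ⟨hp, _⟩; exact ⟨Finset.mem_Icc.mpr ⟨h1, h4⟩, hp⟩
        · rintro ⟨_, hp⟩; refine ⟨hp, ?_⟩; simp only; omega
  · intro a haS
    rw [Sof, Finset.mem_filter, Finset.mem_Icc] at haS
    obtain ⟨⟨ha1, ha4⟩, hmem⟩ := haS
    constructor
    · intro haB
      have hm2 := ((hbd a ha1 ha4).2).mpr haB
      apply hind _ hmem _ hm2
      unfold gridAdj
      simp only
      push_cast
      omega
    · intro haB
      have h14 := Finset.mem_Icc.mp (hB haB)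
      have hm2 := ((hbd (a + 1) h14.1 h14.2).2).mpr haB
      apply hind _ hmem _ hm2
      unfold gridAdj
      simp only
      push_cast
      omega

/-- Gluing: a width-`n` config plus a compatible last column gives a width-`n+1` config. -/
lemma config_glue {n : ℕ} (hn : 1 ≤ n) {B S : Finset ℕ} {σ' : Finset (ℤ × ℤ)}
    (hB : B ⊆ Finset.Icc 1 4) (hS : S ⊆ Finset.Icc 1 4)
    (hc : ∀ a ∈ S, a ∉ B ∧ a + 1 ∉ B) (hσ : ParaConfig 4 n {1, 4} S σ') :
    ParaConfig 4 (n + 1) {1, 4} B (σ' ∪ colF n B) := by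
  obtain ⟨hdom, hind, hbd⟩ := hσ
  have hcol_nadj : ∀ p ∈ σ', ∀ q ∈ colF n B, ¬ gridAdj p q := by
    rintro ⟨x, y⟩ hp q hq hadj
    rcases mem_colF.mp hq with ⟨a, haB, rfl⟩
    have h := hdom ⟨x, y⟩ hp
    simp only at h
    have h14 := Finset.mem_Icc.mp (hB haB)
    unfold gridAdj at hadj
    simp only at hadj
    -- case analysis on the adjacency
    have hcases : ((x : ℤ) = (a : ℤ) ∧ (y = 2 + (n : ℤ) - a + 1 ∨ y = 2 + (n : ℤ) - a - 1)) ∨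
        (y = 2 + (n : ℤ) - (a : ℤ) ∧ ((x : ℤ) = a + 1 ∨ (x : ℤ) = a - 1)) := by omega
    rcases hcases with ⟨hx, hy | hy⟩ | ⟨hy, hx | hx⟩
    · omega
    · -- (x, y) is the right-boundary vertex in row a; a ∈ S contradicts a ∈ B
      have ha1 : 1 ≤ a := h14.1
      have ha4 : a ≤ 4 := h14.2
      have hpt : ((a : ℤ), 1 - (a : ℤ) + (n : ℤ)) = ((x : ℤ), y) := by
        rw [Prod.mk.injEq]; constructor <;> omega
      have haS : a ∈ S := ((hbd a ha1 ha4).2).mp (by rw [hpt]; exact hp)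
      exact (hc a haS).1 haB
    · omega
    · -- (x, y) is the right-boundary vertex in row a - 1
      obtain ⟨c, hcx⟩ : ∃ c : ℕ, (c : ℤ) = x := ⟨x.toNat, by omega⟩
      have hc1 : 1 ≤ c := by omega
      have hc4 : c ≤ 4 := by omega
      have hpt : ((c : ℤ), 1 - (c : ℤ) + (n : ℤ)) = ((x : ℤ), y) := by
        rw [Prod.mk.injEq]; constructor <;> omega
      have hcS : c ∈ S := ((hbd c hc1 hc4).2).mp (by rw [hpt]; exact hp)
      have : c + 1 ∉ B := (hc c hcS).2
      apply this
      have : c + 1 = a := by omega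
      rw [this]; exact haB
  refine ⟨?_, ?_, ?_⟩
  · rintro ⟨x, y⟩ hp
    rcases Finset.mem_union.mp hp with hp | hp
    · have h := hdom ⟨x, y⟩ hp
      simp only at h ⊢
      push_cast
      omega
    · rcases mem_colF.mp hp with ⟨a, haB, he⟩
      rw [Prod.mk.injEq] at he
      have h14 := Finset.mem_Icc.mp (hB haB)
      simp only at he ⊢
      push_cast
      omega
  · intro v hv w hw hadj
    rcases Finset.mem_union.mp hv with hv | hv <;> rcases Finset.mem_union.mp hw with hw | hw
    · exact hind v hv w hw hadj
    · exact hcol_nadj v hv w hw hadj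
    · exact hcol_nadj w hw v hv (gridAdj_comm.mp hadj)
    · rcases mem_colF.mp hv with ⟨a, _, rfl⟩
      rcases mem_colF.mp hw with ⟨b, _, rfl⟩
      unfold gridAdj at hadj
      simp only at hadj
      omega
  · intro a h1 h4
    constructor
    · rw [Finset.mem_union]
      rw [← (hbd a h1 h4).1]
      constructor
      · rintro (hp | hp)
        · exact hp
        · exfalso
          rcases mem_colF.mp hp with ⟨b, hbB, he⟩
          rw [Prod.mk.injEq] at he
          have : (b : ℤ) = (a : ℤ) := he.1
          have hb : b = a := by exact_mod_cast this
          subst hb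
          omega
      · intro hp; exact Or.inl hp
    · rw [Finset.mem_union]
      constructor
      · rintro (hp | hp)
        · exfalso
          have h := hdom _ hp
          simp only at h
          push_cast at h
          omega
        · rcases mem_colF.mp hp with ⟨b, hbB, he⟩
          rw [Prod.mk.injEq] at he
          have : b = a := by exact_mod_cast he.1
          subst this
          exact hbB
      · intro haB
        refine Or.inr (mem_colF.mpr ⟨a, haB, ?_⟩)
        rw [Prod.mk.injEq]
        constructor
        · rfl
        · push_cast; ring

lemma Phi_glue {n : ℕ} {B S : Finset ℕ} {σ' : Finset (ℤ × ℤ)}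
    (hσ : ParaConfig 4 n {1, 4} S σ') :
    Phi n (σ' ∪ colF n B) = σ' := by
  rw [Phi, Finset.filter_union]
  have h1 : σ'.filter (fun p : ℤ × ℤ => p.2 ≤ 1 - p.1 + (n : ℤ)) = σ' :=
    Finset.filter_true_of_mem (fun p hp => (hσ.1 p hp).2.2.2)
  have h2 : (colF n B).filter (fun p : ℤ × ℤ => p.2 ≤ 1 - p.1 + (n : ℤ)) = ∅ := by
    apply Finset.filter_false_of_mem
    intro p hp
    rcases mem_colF.mp hp with ⟨a, _, rfl⟩
    simp only
    omega
  rw [h1, h2, Finset.union_empty]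

lemma Sof_glue {n : ℕ} {B S : Finset ℕ} {σ' : Finset (ℤ × ℤ)} (hS : S ⊆ Finset.Icc 1 4)
    (hσ : ParaConfig 4 n {1, 4} S σ') :
    Sof n (σ' ∪ colF n B) = S := by
  apply Finset.ext
  intro a
  rw [Sof, Finset.mem_filter, Finset.mem_union]
  constructor
  · rintro ⟨hIcc, hp | hp⟩
    · have h14 := Finset.mem_Icc.mp hIcc
      exact ((hσ.2.2 a h14.1 h14.2).2).mp hp
    · exfalso
      rcases mem_colF.mp hp with ⟨b, _, he⟩
      rw [Prod.mk.injEq] at he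
      have : b = a := by exact_mod_cast he.1
      subst this
      omega
  · intro haS
    have h14 := Finset.mem_Icc.mp (hS haS)
    exact ⟨hS haS, Or.inl (((hσ.2.2 a h14.1 h14.2).2).mpr haS)⟩

lemma card_split {n : ℕ} {B : Finset ℕ} {σ : Finset (ℤ × ℤ)} (hB : B ⊆ Finset.Icc 1 4)
    (hσ : ParaConfig 4 (n + 1) {1, 4} B σ) :
    σ.card = (Phi n σ).card + B.card := by
  rw [← card_colF n B, ← colF_eq hB hσ, Phi]
  rw [Finset.card_filter_add_card_filter_not]

lemma glue_Phi {n : ℕ} {B : Finset ℕ} {σ : Finset (ℤ × ℤ)} (hB : B ⊆ Finset.Icc 1 4)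
    (hσ : ParaConfig 4 (n + 1) {1, 4} B σ) :
    Phi n σ ∪ colF n B = σ := by
  rw [← colF_eq hB hσ, Phi]
  exact Finset.filter_union_filter_not_eq _ σ


lemma Zpara_step (n : ℕ) (hn : 1 ≤ n) (B : Finset ℕ) (hB : B ⊆ Finset.Icc 1 4) :
    Zpara 4 (n + 1) {1, 4} B =
      (-1) ^ B.card *
        ∑ S ∈ (Finset.Icc 1 4).powerset, (if compat S B then Zpara 4 n {1, 4} S else 0) := by
  rw [Zpara_eq_sum, Finset.mul_sum]
  have hterm : ∀ S ∈ (Finset.Icc 1 4).powerset,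
      (-1 : ℤ) ^ B.card * (if compat S B then Zpara 4 n {1, 4} S else 0)
        = if compat S B then ∑ σ' ∈ Cfin 4 n {1, 4} S, (-1 : ℤ) ^ (σ'.card + B.card) else 0 := by
    intro S _
    by_cases h : compat S B
    · rw [if_pos h, if_pos h, Zpara_eq_sum, Finset.mul_sum]
      apply Finset.sum_congr rfl
      intro σ' _
      rw [pow_add]
      ring
    · rw [if_neg h, if_neg h, mul_zero]
  rw [Finset.sum_congr rfl hterm, ← Finset.sum_filter, Finset.sum_sigma']
  apply Finset.sum_nbij' (i := fun σ => (⟨Sof n σ, Phi n σ⟩ : Σ _ : Finset ℕ, Finset (ℤ × ℤ)))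
    (j := fun q => q.2 ∪ colF n B)
  · intro σ hσ
    rw [Cfin, Set.Finite.mem_toFinset, Set.mem_setOf_eq] at hσ
    obtain ⟨hcfg, hcompat⟩ := config_peel hn hB hσ
    rw [Finset.mem_sigma, Finset.mem_filter, Finset.mem_powerset]
    refine ⟨⟨Finset.filter_subset _ _, hcompat⟩, ?_⟩
    rw [Cfin, Set.Finite.mem_toFinset, Set.mem_setOf_eq]
    exact hcfg
  · rintro ⟨S, σ'⟩ hq
    rw [Finset.mem_sigma, Finset.mem_filter, Finset.mem_powerset] at hq
    obtain ⟨⟨hS, hcompat⟩, hσ'⟩ := hq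
    rw [Cfin, Set.Finite.mem_toFinset, Set.mem_setOf_eq] at hσ' ⊢
    exact config_glue hn hB hS hcompat hσ'
  · intro σ hσ
    rw [Cfin, Set.Finite.mem_toFinset, Set.mem_setOf_eq] at hσ
    exact glue_Phi hB hσ
  · rintro ⟨S, σ'⟩ hq
    rw [Finset.mem_sigma, Finset.mem_filter, Finset.mem_powerset] at hq
    obtain ⟨⟨hS, hcompat⟩, hσ'⟩ := hq
    rw [Cfin, Set.Finite.mem_toFinset, Set.mem_setOf_eq] at hσ'
    have h1 := Sof_glue (B := B) hS hσ'
    have h2 := Phi_glue (B := B) hσ'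
    rw [Sigma.mk.inj_iff]
    refine ⟨h1, ?_⟩
    rw [h2]
  · intro σ hσ
    rw [Cfin, Set.Finite.mem_toFinset, Set.mem_setOf_eq] at hσ
    rw [card_split hB hσ]


lemma bridge : ∀ (n : ℕ) (B : Finset ℕ), B ⊆ Finset.Icc 1 4 →
    Zpara 4 (n + 1) {1, 4} B = w n B := by
  intro n
  induction n with
  | zero =>
    intro B hB
    rw [Zpara_one B hB]
    rfl
  | succ n ih =>
    intro B hB
    rw [Zpara_step (n + 1) (by omega) B hB, w_succ, wstep]
    have hsum : (∑ S ∈ (Finset.Icc 1 4).powerset, if compat S B then Zpara 4 (n + 1) {1, 4} S else 0)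
        = ∑ S ∈ (Finset.Icc 1 4).powerset, if compat S B then w n S else 0 := by
      apply Finset.sum_congr rfl
      intro S hS
      rw [Finset.mem_powerset] at hS
      by_cases h : compat S B
      · rw [if_pos h, if_pos h, ih S hS]
      · rw [if_neg h, if_neg h]
    rw [hsum]

lemma coeff_Gser (k : ℕ) : (PowerSeries.coeff k) (Gser 4 {1, 4}) = w k {1, 4} := by
  rw [Gser, PowerSeries.coeff_mk]
  cases k with
  | zero => rw [if_pos rfl, w0_s14]
  | succ k =>
    rw [if_neg (Nat.succ_ne_zero k), bridge (k + 1) {1, 4} (by decide)]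
    norm_num

/-- For `m = 4` and `A = {1,4}`,
`G_{A,A}(t)·(1 + t³)(1 − t⁴) = 1 + t² + t³` in `ℤ[[t]]`. -/
theorem Gser_one_four :
    Gser 4 {1, 4} *
        ((1 + PowerSeries.X ^ 3) * (1 - PowerSeries.X ^ 4)) =
      1 + PowerSeries.X ^ 2 + PowerSeries.X ^ 3 := by
  have hX : ((1 : PowerSeries ℤ) + PowerSeries.X ^ 3) * (1 - PowerSeries.X ^ 4)
      = 1 + PowerSeries.X ^ 3 - PowerSeries.X ^ 4 - PowerSeries.X ^ 7 := by ring
  rw [hX]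
  ext k
  rw [mul_sub, mul_sub, mul_add, mul_one]
  simp only [map_sub, map_add, PowerSeries.coeff_mul_X_pow', coeff_Gser,
    PowerSeries.coeff_one, PowerSeries.coeff_X_pow]
  rcases lt_or_ge k 7 with hk | hk
  · interval_cases k <;>
      norm_num [w0_s14, w1_s14, w2_s14, w3_s14, w4_s14, w5_s14, w6_s14]
  · obtain ⟨j, rfl⟩ : ∃ j, k = j + 7 := ⟨k - 7, by omega⟩
    have h := wrec j {1, 4} (by decide)
    rw [if_pos (by omega : 3 ≤ j + 7), if_pos (by omega : 4 ≤ j + 7),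
      if_pos (by omega : 7 ≤ j + 7), if_neg (by omega : ¬ j + 7 = 0),
      if_neg (by omega : ¬ j + 7 = 2), if_neg (by omega : ¬ j + 7 = 3),
      show j + 7 - 3 = j + 4 from by omega, show j + 7 - 4 = j + 3 from by omega,
      show j + 7 - 7 = j from by omega]
    linarith
end
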